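/- arXiv:2410.10040 — 10 statements merged into one kernel-verified Lean document; each statement's English description precedes it below -/
import Mathlib

section
/- Let S_t : 𝒜 → 𝒜 (t ≥ 0) satisfy S₀ = id, S_{t+s} = S_t ∘ S_s for all t, s ≥ 0, and the L¹-contraction property ‖S_tρ − S_tη‖_{L¹} ≤ ‖ρ − η‖_{L¹} for all t ≥ 0 and ρ, η ∈ 𝒜. Let ρ₀, ρ∞ ∈ 𝒜, assume the map t ↦ S_tρ₀ is continuous from [0,∞) into L¹(μ), and assume there is a sequence tₙ → ∞ such that ∫₀¹ ‖S_{s+tₙ}ρ₀ − ρ∞‖_{L¹} ds → 0 as n → ∞. Then S_tρ∞ = ρ∞ for every t ≥ 0, and ‖S_tρ₀ − ρ∞‖_{L¹} → 0 as t → ∞. -/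
open MeasureTheory Filter Topology

/-- Abstract long-time convergence for a C₀-semigroup of L¹-contractions: if the orbit
converges to a profile in L¹((0,1); L¹(μ)) along a sequence of times tending to infinity,
then the profile is stationary and the whole orbit converges to it in L¹ as t → ∞. -/
theorem semigroup_longtime_convergence
    {X : Type*} [MeasurableSpace X] (μ : Measure X)
    (A : Set (Lp ℝ 1 μ))
    (S : ℝ → Lp ℝ 1 μ → Lp ℝ 1 μ)
    (hSA : ∀ t : ℝ, 0 ≤ t → ∀ ρ ∈ A, S t ρ ∈ A)
    (hS0 : ∀ ρ ∈ A, S 0 ρ = ρ)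
    (hSadd : ∀ t : ℝ, 0 ≤ t → ∀ s : ℝ, 0 ≤ s → ∀ ρ ∈ A, S (t + s) ρ = S t (S s ρ))
    (hScontr : ∀ t : ℝ, 0 ≤ t → ∀ ρ ∈ A, ∀ η ∈ A, ‖S t ρ - S t η‖ ≤ ‖ρ - η‖)
    (ρ₀ : Lp ℝ 1 μ) (hρ₀ : ρ₀ ∈ A)
    (ρinf : Lp ℝ 1 μ) (hρinf : ρinf ∈ A)
    (hcont : ContinuousOn (fun t : ℝ => S t ρ₀) (Set.Ici 0))
    (tseq : ℕ → ℝ) (htseq : Tendsto tseq atTop atTop)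
    (hconv : Tendsto (fun n => ∫ s in (0:ℝ)..1, ‖S (s + tseq n) ρ₀ - ρinf‖) atTop (𝓝 0)) :
    (∀ t : ℝ, 0 ≤ t → S t ρinf = ρinf) ∧
    Tendsto (fun t : ℝ => ‖S t ρ₀ - ρinf‖) atTop (𝓝 0) := by
  set I : ℕ → ℝ := fun n => ∫ s in (0:ℝ)..1, ‖S (s + tseq n) ρ₀ - ρinf‖ with hIdef
  -- continuity of the shifted orbit norm on [0,1]
  have hfcont : ∀ n : ℕ, 0 ≤ tseq n →
      ContinuousOn (fun s : ℝ => ‖S (s + tseq n) ρ₀ - ρinf‖) (Set.Icc 0 1) := by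
    intro n hn
    apply ContinuousOn.norm
    apply ContinuousOn.sub _ continuousOn_const
    exact hcont.comp ((continuous_id.add continuous_const).continuousOn)
      (fun s hs => add_nonneg hs.1 hn)
  have hInonneg : ∀ n, 0 ≤ I n := fun n =>
    intervalIntegral.integral_nonneg (by norm_num) (fun u _ => norm_nonneg _)
  -- Key: a good time in [0, 1/2] where both the orbit and its h-shift are close to ρinf
  have keyA : ∀ n : ℕ, 0 ≤ tseq n → ∀ h : ℝ, 0 ≤ h → h ≤ 1/2 →
      ∃ σ : ℝ, 0 ≤ σ ∧ σ ≤ 1/2 ∧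
        ‖S (σ + h + tseq n) ρ₀ - ρinf‖ + ‖S (σ + tseq n) ρ₀ - ρinf‖ ≤ 4 * I n := by
    intro n hn h hh0 hh1
    set f : ℝ → ℝ := fun s => ‖S (s + tseq n) ρ₀ - ρinf‖ with hfdef
    have hfc : ContinuousOn f (Set.Icc 0 1) := hfcont n hn
    have hsub : Set.Icc (0:ℝ) (1/2) ⊆ Set.Icc 0 1 :=
      Set.Icc_subset_Icc le_rfl (by norm_num)
    have hmaps : Set.MapsTo (fun s : ℝ => s + h) (Set.Icc 0 (1/2)) (Set.Icc 0 1) := by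
      intro s hs
      refine ⟨add_nonneg hs.1 hh0, ?_⟩
      show s + h ≤ 1
      have := hs.2; linarith
    have hgc : ContinuousOn (fun s => f s + f (s + h)) (Set.Icc 0 (1/2)) :=
      (hfc.mono hsub).add
        (hfc.comp ((continuous_id.add continuous_const).continuousOn) hmaps)
    obtain ⟨σ, hσmem, hσmin⟩ :=
      isCompact_Icc.exists_isMinOn (Set.nonempty_Icc.2 (by norm_num)) hgc
    -- integrability
    have huIcc : Set.uIcc (0:ℝ) 1 = Set.Icc 0 1 := Set.uIcc_of_le (by norm_num)
    have huIcc2 : Set.uIcc (0:ℝ) (1/2) = Set.Icc 0 (1/2) := Set.uIcc_of_le (by norm_num)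
    have hint1 : IntervalIntegrable f volume 0 1 := by
      apply ContinuousOn.intervalIntegrable; rw [huIcc]; exact hfc
    have hint2 : IntervalIntegrable f volume 0 (1/2) := by
      apply ContinuousOn.intervalIntegrable; rw [huIcc2]; exact hfc.mono hsub
    have hint3 : IntervalIntegrable (fun s => f (s + h)) volume 0 (1/2) := by
      apply ContinuousOn.intervalIntegrable; rw [huIcc2]
      exact hfc.comp ((continuous_id.add continuous_const).continuousOn) hmaps
    have hint4 : IntervalIntegrable f volume h (1/2 + h) := by
      apply ContinuousOn.intervalIntegrable
      rw [Set.uIcc_of_le (by linarith)]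
      exact hfc.mono (Set.Icc_subset_Icc hh0 (by linarith))
    have hnn : 0 ≤ᵐ[volume.restrict (Set.Ioc (0:ℝ) 1)] f :=
      Filter.Eventually.of_forall (fun u => norm_nonneg _)
    -- the average bound
    have hb1 : (1/2 : ℝ) * (f σ + f (σ + h)) ≤ ∫ s in (0:ℝ)..(1/2), (f s + f (s + h)) := by
      have hc : (∫ _ in (0:ℝ)..(1/2), (f σ + f (σ + h))) = (1/2 : ℝ) * (f σ + f (σ + h)) := by
        simp [intervalIntegral.integral_const]; ring
      rw [← hc]
      exact intervalIntegral.integral_mono_on (by norm_num)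
        (intervalIntegrable_const) (hint2.add hint3) (fun x hx => hσmin hx)
    have hb2 : (∫ s in (0:ℝ)..(1/2), (f s + f (s + h)))
        = (∫ s in (0:ℝ)..(1/2), f s) + ∫ s in (0:ℝ)..(1/2), f (s + h) :=
      intervalIntegral.integral_add hint2 hint3
    have hb3 : (∫ s in (0:ℝ)..(1/2), f s) ≤ I n :=
      intervalIntegral.integral_mono_interval le_rfl (by norm_num) (by norm_num) hnn hint1
    have hb4 : (∫ s in (0:ℝ)..(1/2), f (s + h)) ≤ I n := by
      rw [intervalIntegral.integral_comp_add_right f h]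
      have : (0:ℝ) + h = h := zero_add h
      rw [this]
      exact intervalIntegral.integral_mono_interval (by linarith) (by linarith)
        (by linarith) hnn hint1
    refine ⟨σ, hσmem.1, hσmem.2, ?_⟩
    have : f σ + f (σ + h) ≤ 4 * I n := by linarith
    have hfs : f (σ + h) = ‖S (σ + h + tseq n) ρ₀ - ρinf‖ := rfl
    have hfs2 : f σ = ‖S (σ + tseq n) ρ₀ - ρinf‖ := rfl
    linarith [this]
  have h40 : Tendsto (fun n => 4 * I n) atTop (𝓝 0) := by
    simpa using hconv.const_mul 4
  -- stationarity for small times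
  have stat_small : ∀ h : ℝ, 0 ≤ h → h ≤ 1/2 → S h ρinf = ρinf := by
    intro h hh0 hh1
    have hev : ∀ᶠ n in atTop, ‖S h ρinf - ρinf‖ ≤ 4 * I n := by
      filter_upwards [htseq.eventually_ge_atTop 0] with n hn
      obtain ⟨σ, hσ0, hσ1, hb⟩ := keyA n hn h hh0 hh1
      have hσtn : (0:ℝ) ≤ σ + tseq n := add_nonneg hσ0 hn
      have hmemσ : S (σ + tseq n) ρ₀ ∈ A := hSA _ hσtn ρ₀ hρ₀
      have heq : S (σ + h + tseq n) ρ₀ = S h (S (σ + tseq n) ρ₀) := by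
        have e : σ + h + tseq n = h + (σ + tseq n) := by ring
        rw [e, hSadd h hh0 (σ + tseq n) hσtn ρ₀ hρ₀]
      have hc : ‖S h ρinf - S h (S (σ + tseq n) ρ₀)‖ ≤ ‖ρinf - S (σ + tseq n) ρ₀‖ :=
        hScontr h hh0 ρinf hρinf (S (σ + tseq n) ρ₀) hmemσ
      have htri : ‖S h ρinf - ρinf‖ ≤
          ‖S h ρinf - S h (S (σ + tseq n) ρ₀)‖ + ‖S h (S (σ + tseq n) ρ₀) - ρinf‖ :=
        norm_sub_le_norm_sub_add_norm_sub _ _ _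
      rw [← heq, norm_sub_rev ρinf] at hc
      rw [← heq] at htri
      linarith
    have hle : ‖S h ρinf - ρinf‖ ≤ 0 := ge_of_tendsto h40 hev
    have : ‖S h ρinf - ρinf‖ = 0 := le_antisymm hle (norm_nonneg _)
    exact sub_eq_zero.mp (norm_eq_zero.mp this)
  -- full stationarity
  have stat : ∀ t : ℝ, 0 ≤ t → S t ρinf = ρinf := by
    have key : ∀ k : ℕ, ∀ t : ℝ, 0 ≤ t → t ≤ (k : ℝ) / 2 → S t ρinf = ρinf := by
      intro k
      induction k with
      | zero =>
        intro t ht0 ht1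
        have : t = 0 := le_antisymm (by simpa using ht1) ht0
        rw [this]; exact hS0 ρinf hρinf
      | succ k ih =>
        intro t ht0 ht1
        by_cases hc : t ≤ 1/2
        · exact stat_small t ht0 hc
        · push_neg at hc
          have h1 : (0:ℝ) ≤ t - 1/2 := by linarith
          have h2 : t - 1/2 ≤ (k : ℝ) / 2 := by push_cast at ht1 ⊢; linarith
          have e : t = (t - 1/2) + 1/2 := by ring
          rw [e, hSadd _ h1 _ (by norm_num) ρinf hρinf,
            stat_small (1/2) (by norm_num) le_rfl]
          exact ih _ h1 h2
    intro t ht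
    exact key ⌈2*t⌉₊ t ht (by have := Nat.le_ceil (2*t); linarith)
  -- monotonicity of the distance to the (now stationary) profile
  have mono : ∀ u t : ℝ, 0 ≤ u → u ≤ t → ‖S t ρ₀ - ρinf‖ ≤ ‖S u ρ₀ - ρinf‖ := by
    intro u t hu hut
    have h1 : (0:ℝ) ≤ t - u := by linarith
    have e : t = (t - u) + u := by ring
    calc ‖S t ρ₀ - ρinf‖ = ‖S (t-u) (S u ρ₀) - S (t-u) ρinf‖ := by
          rw [stat _ h1, ← hSadd _ h1 _ hu ρ₀ hρ₀, ← e]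
      _ ≤ ‖S u ρ₀ - ρinf‖ := hScontr _ h1 _ (hSA _ hu ρ₀ hρ₀) _ hρinf
  refine ⟨stat, ?_⟩
  rw [Metric.tendsto_atTop]
  intro ε hε
  have hev : ∀ᶠ n in atTop, 0 ≤ tseq n ∧ 4 * I n < ε :=
    (htseq.eventually_ge_atTop 0).and (h40.eventually (gt_mem_nhds hε))
  obtain ⟨n, hn0, hnε⟩ := hev.exists
  obtain ⟨σ, hσ0, hσ1, hb⟩ := keyA n hn0 0 le_rfl (by norm_num)
  rw [add_zero] at hb
  refine ⟨tseq n + 1/2, fun t ht => ?_⟩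
  have h1 : ‖S t ρ₀ - ρinf‖ ≤ ‖S (σ + tseq n) ρ₀ - ρinf‖ :=
    mono (σ + tseq n) t (add_nonneg hσ0 hn0) (by linarith)
  rw [Real.dist_eq, sub_zero, abs_of_nonneg (norm_nonneg _)]
  linarith
end

section
/- Let ρ̲, ρ̄ ∈ ℝ^N and let H : Q → ℝ^N be mass-conserving and monotone on the coordinate box Q spanned by ρ̲ and ρ̄. Suppose f̲, f̄, g̲, ḡ ∈ ℝ^N satisfy |H_i(ρ̲) − f̲_i| ≤ g̲_i and |H_i(ρ̄) − f̄_i| ≤ ḡ_i for all i. Then Σ_{i=1}^N |ρ̲_i − ρ̄_i| ≤ Σ_{i=1}^N |f̲_i − f̄_i| + 2·Σ_{i=1}^N max(g̲_i, ḡ_i), and Σ_{i=1}^N (ρ̲_i − ρ̄_i)⁺ ≤ Σ_{i=1}^N (f̲_i − f̄_i)⁺ + 2·Σ_{i=1}^N max(g̲_i, ḡ_i). -/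
open Finset

/-- L¹ continuous dependence for mass-conserving monotone maps on a coordinate box. -/
theorem discrete_L1_continuous_dependence
    (N : ℕ) (ρl ρu : Fin N → ℝ)
    (H : (Fin N → ℝ) → (Fin N → ℝ))
    (hmass : ∀ ρ : Fin N → ℝ,
      (∀ i, min (ρl i) (ρu i) ≤ ρ i ∧ ρ i ≤ max (ρl i) (ρu i)) →
      ∑ i, H ρ i = ∑ i, ρ i)
    (hmono : ∀ i : Fin N, ∀ ρ σ : Fin N → ℝ,
      (∀ j, min (ρl j) (ρu j) ≤ ρ j ∧ ρ j ≤ max (ρl j) (ρu j)) →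
      (∀ j, min (ρl j) (ρu j) ≤ σ j ∧ σ j ≤ max (ρl j) (ρu j)) →
      σ i = ρ i → (∀ j, j ≠ i → ρ j ≤ σ j) → H σ i ≤ H ρ i)
    (fl fu gl gu : Fin N → ℝ)
    (hfl : ∀ i, |H ρl i - fl i| ≤ gl i)
    (hfu : ∀ i, |H ρu i - fu i| ≤ gu i) :
    (∑ i, |ρl i - ρu i| ≤ ∑ i, |fl i - fu i| + 2 * ∑ i, max (gl i) (gu i)) ∧
    (∑ i, max (ρl i - ρu i) 0 ≤ ∑ i, max (fl i - fu i) 0 + 2 * ∑ i, max (gl i) (gu i)) := by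
  set m : Fin N → ℝ := fun i => min (ρl i) (ρu i) with hm
  have hQl : ∀ j, min (ρl j) (ρu j) ≤ ρl j ∧ ρl j ≤ max (ρl j) (ρu j) :=
    fun j => ⟨min_le_left _ _, le_max_left _ _⟩
  have hQu : ∀ j, min (ρl j) (ρu j) ≤ ρu j ∧ ρu j ≤ max (ρl j) (ρu j) :=
    fun j => ⟨min_le_right _ _, le_max_right _ _⟩
  have hQm : ∀ j, min (ρl j) (ρu j) ≤ m j ∧ m j ≤ max (ρl j) (ρu j) :=
    fun j => ⟨le_refl _, min_le_max⟩
  have key1 : ∀ i, ρl i ≤ ρu i → H ρl i ≤ H m i := by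
    intro i h
    exact hmono i m ρl hQm hQl (min_eq_left h).symm (fun j _ => min_le_left _ _)
  have key2 : ∀ i, ρu i ≤ ρl i → H ρu i ≤ H m i := by
    intro i h
    exact hmono i m ρu hQm hQu (min_eq_right h).symm (fun j _ => min_le_right _ _)
  have hml := hmass ρl hQl
  have hmu := hmass ρu hQu
  have hmm := hmass m hQm
  have hglnn : ∀ i, (0:ℝ) ≤ gl i := fun i => le_trans (abs_nonneg _) (hfl i)
  have hgunn : ∀ i, (0:ℝ) ≤ gu i := fun i => le_trans (abs_nonneg _) (hfu i)
  -- sum identities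
  have s1 : ∑ i, |ρl i - ρu i| =
      (∑ i, (H ρl i - H m i)) + (∑ i, (H ρu i - H m i)) := by
    have e : ∀ i ∈ Finset.univ, |ρl i - ρu i| = (ρl i - m i) + (ρu i - m i) := by
      intro i _
      rcases le_total (ρl i) (ρu i) with h | h
      · rw [abs_of_nonpos (by linarith)]
        have : m i = ρl i := min_eq_left h
        linarith
      · rw [abs_of_nonneg (by linarith)]
        have : m i = ρu i := min_eq_right h
        linarith
    rw [Finset.sum_congr rfl e]
    rw [Finset.sum_add_distrib]
    simp only [Finset.sum_sub_distrib]
    linarith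
  have s2 : ∑ i, max (ρl i - ρu i) 0 = ∑ i, (H ρl i - H m i) := by
    have e : ∀ i ∈ Finset.univ, max (ρl i - ρu i) 0 = ρl i - m i := by
      intro i _
      rcases le_total (ρl i) (ρu i) with h | h
      · rw [max_eq_right (by linarith)]
        have : m i = ρl i := min_eq_left h
        linarith
      · rw [max_eq_left (by linarith)]
        have : m i = ρu i := min_eq_right h
        linarith
    rw [Finset.sum_congr rfl e]
    simp only [Finset.sum_sub_distrib]
    linarith
  constructor
  · rw [s1, ← Finset.sum_add_distrib]
    have hpt : ∀ i ∈ Finset.univ,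
        (H ρl i - H m i) + (H ρu i - H m i) ≤ |fl i - fu i| + 2 * max (gl i) (gu i) := by
      intro i _
      have h1 := abs_le.mp (hfl i)
      have h2 := abs_le.mp (hfu i)
      have h3 : fl i - fu i ≤ |fl i - fu i| := le_abs_self _
      have h4 : -|fl i - fu i| ≤ fl i - fu i := neg_abs_le _
      have h5 : gl i ≤ max (gl i) (gu i) := le_max_left _ _
      have h6 : gu i ≤ max (gl i) (gu i) := le_max_right _ _
      rcases le_total (ρl i) (ρu i) with h | h
      · have := key1 i h
        linarith [h1.1, h1.2, h2.1, h2.2]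
      · have := key2 i h
        linarith [h1.1, h1.2, h2.1, h2.2]
    calc ∑ i, ((H ρl i - H m i) + (H ρu i - H m i))
        ≤ ∑ i, (|fl i - fu i| + 2 * max (gl i) (gu i)) := Finset.sum_le_sum hpt
      _ = ∑ i, |fl i - fu i| + 2 * ∑ i, max (gl i) (gu i) := by
          rw [Finset.sum_add_distrib, Finset.mul_sum]
  · rw [s2]
    have hpt : ∀ i ∈ Finset.univ,
        H ρl i - H m i ≤ max (fl i - fu i) 0 + 2 * max (gl i) (gu i) := by
      intro i _
      have h1 := abs_le.mp (hfl i)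
      have h2 := abs_le.mp (hfu i)
      have h3 : fl i - fu i ≤ max (fl i - fu i) 0 := le_max_left _ _
      have h3' : (0:ℝ) ≤ max (fl i - fu i) 0 := le_max_right _ _
      have h5 : gl i ≤ max (gl i) (gu i) := le_max_left _ _
      have h6 : gu i ≤ max (gl i) (gu i) := le_max_right _ _
      rcases le_total (ρl i) (ρu i) with h | h
      · have := key1 i h
        linarith [hglnn i, hgunn i]
      · have := key2 i h
        linarith [h1.1, h1.2, h2.1, h2.2]
    calc ∑ i, (H ρl i - H m i)
        ≤ ∑ i, (max (fl i - fu i) 0 + 2 * max (gl i) (gu i)) := Finset.sum_le_sum hpt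
      _ = ∑ i, max (fl i - fu i) 0 + 2 * ∑ i, max (gl i) (gu i) := by
          rw [Finset.sum_add_distrib, Finset.mul_sum]
end

section
/- Let ρ̲, ρ̄ ∈ ℝ^N and let H : Q → ℝ^N be mass-conserving and monotone on the coordinate box Q spanned by ρ̲ and ρ̄. If H_i(ρ̲) ≤ H_i(ρ̄) for all i, then ρ̲_i ≤ ρ̄_i for all i. -/
open Finset

/-- Comparison principle for mass-conserving monotone maps on a coordinate box. -/
theorem discrete_comparison_principle
    (N : ℕ) (ρl ρu : Fin N → ℝ)
    (H : (Fin N → ℝ) → (Fin N → ℝ))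
    (hmass : ∀ ρ : Fin N → ℝ,
      (∀ i, min (ρl i) (ρu i) ≤ ρ i ∧ ρ i ≤ max (ρl i) (ρu i)) →
      ∑ i, H ρ i = ∑ i, ρ i)
    (hmono : ∀ i : Fin N, ∀ ρ σ : Fin N → ℝ,
      (∀ j, min (ρl j) (ρu j) ≤ ρ j ∧ ρ j ≤ max (ρl j) (ρu j)) →
      (∀ j, min (ρl j) (ρu j) ≤ σ j ∧ σ j ≤ max (ρl j) (ρu j)) →
      σ i = ρ i → (∀ j, j ≠ i → ρ j ≤ σ j) → H σ i ≤ H ρ i)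
    (hle : ∀ i, H ρl i ≤ H ρu i) :
    ∀ i, ρl i ≤ ρu i := by
  have hQl : ∀ j, min (ρl j) (ρu j) ≤ ρl j ∧ ρl j ≤ max (ρl j) (ρu j) :=
    fun j => ⟨min_le_left _ _, le_max_left _ _⟩
  have hQu : ∀ j, min (ρl j) (ρu j) ≤ ρu j ∧ ρu j ≤ max (ρl j) (ρu j) :=
    fun j => ⟨min_le_right _ _, le_max_right _ _⟩
  set σ : Fin N → ℝ := fun j => max (ρl j) (ρu j) with hσ
  have hQσ : ∀ j, min (ρl j) (ρu j) ≤ σ j ∧ σ j ≤ max (ρl j) (ρu j) :=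
    fun j => ⟨min_le_max, le_refl _⟩
  have key : ∀ i, H σ i ≤ H ρu i := by
    intro i
    by_cases h : ρl i ≤ ρu i
    · exact hmono i ρu σ hQu hQσ (max_eq_right h) (fun j _ => le_max_right _ _)
    · exact le_trans
        (hmono i ρl σ hQl hQσ (max_eq_left (le_of_not_ge h)) (fun j _ => le_max_left _ _))
        (hle i)
  have hsum : ∑ i, σ i ≤ ∑ i, ρu i := by
    rw [← hmass σ hQσ, ← hmass ρu hQu]
    exact Finset.sum_le_sum fun i _ => key i
  intro i
  have hσu : σ i ≤ ρu i := by
    by_contra h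
    push_neg at h
    have : ∑ j, ρu j < ∑ j, σ j :=
      Finset.sum_lt_sum (fun j _ => le_max_right _ _) ⟨i, Finset.mem_univ i, h⟩
    linarith
  exact le_trans (le_max_left _ _) hσu
end

section
/- Assume m¹, m² : [0,α] → [0,∞) with m¹ nondecreasing and m² nonincreasing, and assume U′ : [0,α] → ℝ is nondecreasing. Then for every λ ≥ 0: (a) Σ_{i=1}^N H_i(λ,ρ) = Σ_{i=1}^N ρ_i for every ρ ∈ [0,α]^N (mass conservation); (b) for every index i and all ρ, σ ∈ [0,α]^N with σ_i = ρ_i and σ_j ≥ ρ_j for all j ≠ i, one has H_i(λ,σ) ≤ H_i(λ,ρ) (off-diagonal monotonicity of the upwind scheme). -/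
open Set Finset

/-- Velocity v_{k+1/2} at the interface between cells k and k+1 (0-based). -/
noncomputable def vel (N : ℕ) (Δx : ℝ) (V : Fin N → ℝ) (U' : ℝ → ℝ)
    (ρ : Fin N → ℝ) (k : ℕ) : ℝ :=
  if h : k + 1 < N then
    -(((U' (ρ ⟨k + 1, h⟩) + V ⟨k + 1, h⟩) -
        (U' (ρ ⟨k, Nat.lt_of_succ_lt h⟩) + V ⟨k, Nat.lt_of_succ_lt h⟩)) / Δx)
  else 0

/-- Upwind numerical flux F_{k+1/2} at the interface between cells k and k+1
(0-based), with the no-flux convention at the boundary. -/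
noncomputable def numFlux (N : ℕ) (Δx : ℝ) (V : Fin N → ℝ) (m1 m2 U' : ℝ → ℝ)
    (ρ : Fin N → ℝ) (k : ℕ) : ℝ :=
  if h : k + 1 < N then
    m1 (ρ ⟨k, Nat.lt_of_succ_lt h⟩) * m2 (ρ ⟨k + 1, h⟩) *
        max (vel N Δx V U' ρ k) 0 +
      m1 (ρ ⟨k + 1, h⟩) * m2 (ρ ⟨k, Nat.lt_of_succ_lt h⟩) *
        min (vel N Δx V U' ρ k) 0
  else 0

/-- One implicit Euler step map H_i(λ, ρ) = ρ_i + λ(Δt/Δx)(F_{i+1/2} − F_{i−1/2}). -/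
noncomputable def Hmap (N : ℕ) (Δx Δt : ℝ) (V : Fin N → ℝ) (m1 m2 U' : ℝ → ℝ)
    (lam : ℝ) (ρ : Fin N → ℝ) (i : Fin N) : ℝ :=
  ρ i + lam * (Δt / Δx) *
    (numFlux N Δx V m1 m2 U' ρ i -
      if (i : ℕ) = 0 then 0 else numFlux N Δx V m1 m2 U' ρ ((i : ℕ) - 1))

/-- Algebraic core: flux decreases when the right-cell data worsens. -/
lemma flux_pair_mono_right {p q c c' d d' v v' : ℝ}
    (hp : 0 ≤ p) (hq : 0 ≤ q) (hc' : 0 ≤ c') (hcc : c' ≤ c)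
    (hd : 0 ≤ d) (hdd : d ≤ d') (hv : v' ≤ v) :
    p * c' * max v' 0 + d' * q * min v' 0 ≤ p * c * max v 0 + d * q * min v 0 := by
  have h1 : p * c' * max v' 0 ≤ p * c * max v 0 :=
    mul_le_mul (mul_le_mul_of_nonneg_left hcc hp) (max_le_max hv le_rfl)
      (le_max_right _ _) (mul_nonneg hp (hc'.trans hcc))
  have e1 : d' * q * min v' 0 ≤ d' * q * min v 0 :=
    mul_le_mul_of_nonneg_left (min_le_min hv le_rfl) (mul_nonneg (hd.trans hdd) hq)
  have e2 : d' * q * min v 0 ≤ d * q * min v 0 :=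
    mul_le_mul_of_nonpos_right (mul_le_mul_of_nonneg_right hdd hq) (min_le_right _ _)
  linarith

/-- Algebraic core: flux increases when the left-cell data improves. -/
lemma flux_pair_mono_left {p q c c' d d' v v' : ℝ}
    (hp : 0 ≤ p) (hq : 0 ≤ q) (hc : 0 ≤ c) (hcc : c ≤ c')
    (hd' : 0 ≤ d') (hdd : d' ≤ d) (hv : v ≤ v') :
    c * p * max v 0 + q * d * min v 0 ≤ c' * p * max v' 0 + q * d' * min v' 0 := by
  have h1 : c * p * max v 0 ≤ c' * p * max v' 0 :=
    mul_le_mul (mul_le_mul_of_nonneg_right hcc hp) (max_le_max hv le_rfl)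
      (le_max_right _ _) (mul_nonneg (hc.trans hcc) hp)
  have e1 : q * d * min v 0 ≤ q * d * min v' 0 :=
    mul_le_mul_of_nonneg_left (min_le_min hv le_rfl) (mul_nonneg hq (hd'.trans hdd))
  have e2 : q * d * min v' 0 ≤ q * d' * min v' 0 :=
    mul_le_mul_of_nonpos_right (mul_le_mul_of_nonneg_left hdd hq) (min_le_right _ _)
  linarith

/-- Mass conservation and off-diagonal monotonicity of the implicit upwind scheme. -/
theorem scheme_mass_conservation_and_monotonicity
    (N : ℕ) (hN : 2 ≤ N) (Δx Δt : ℝ) (hΔx : Δx = 1 / N) (hΔt : 0 < Δt)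
    (α : ℝ) (hα : 0 < α) (V : Fin N → ℝ)
    (m1 m2 U' : ℝ → ℝ)
    (hm1_nonneg : ∀ s ∈ Icc 0 α, 0 ≤ m1 s) (hm1_mono : MonotoneOn m1 (Icc 0 α))
    (hm2_nonneg : ∀ s ∈ Icc 0 α, 0 ≤ m2 s) (hm2_anti : AntitoneOn m2 (Icc 0 α))
    (hU'_mono : MonotoneOn U' (Icc 0 α))
    (lam : ℝ) (hlam : 0 ≤ lam) :
    (∀ ρ : Fin N → ℝ, (∀ i, ρ i ∈ Icc 0 α) →
        ∑ i, Hmap N Δx Δt V m1 m2 U' lam ρ i = ∑ i, ρ i) ∧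
    (∀ i : Fin N, ∀ ρ σ : Fin N → ℝ,
        (∀ j, ρ j ∈ Icc 0 α) → (∀ j, σ j ∈ Icc 0 α) →
        σ i = ρ i → (∀ j, j ≠ i → ρ j ≤ σ j) →
        Hmap N Δx Δt V m1 m2 U' lam σ i ≤ Hmap N Δx Δt V m1 m2 U' lam ρ i) := by
  have hN0 : 0 < N := by omega
  have hNR : (0 : ℝ) < N := by exact_mod_cast hN0
  have hΔxpos : 0 < Δx := by rw [hΔx]; positivity
  constructor
  · -- mass conservation
    intro ρ hρ
    set f : ℕ → ℝ := numFlux N Δx V m1 m2 U' ρ with hf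
    have key : ∑ i : Fin N,
        (f ↑i - if (i : ℕ) = 0 then 0 else f ((i : ℕ) - 1)) = 0 := by
      rw [Fin.sum_univ_eq_sum_range
        (fun k => f k - if k = 0 then 0 else f (k - 1))]
      obtain ⟨M, rfl⟩ : ∃ M, N = M + 1 := ⟨N - 1, by omega⟩
      rw [Finset.sum_sub_distrib, Finset.sum_range_succ, Finset.sum_range_succ'
        (fun k => if k = 0 then 0 else f (k - 1))]
      have hfM : f M = 0 := by
        rw [hf, numFlux, dif_neg (by omega)]
      simp [hfM]
    calc ∑ i, Hmap N Δx Δt V m1 m2 U' lam ρ i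
        = ∑ i, ρ i + lam * (Δt / Δx) * ∑ i : Fin N,
            (f ↑i - if (i : ℕ) = 0 then 0 else f ((i : ℕ) - 1)) := by
          rw [Finset.mul_sum, ← Finset.sum_add_distrib]
          rfl
      _ = ∑ i, ρ i := by rw [key, mul_zero, add_zero]
  · -- monotonicity
    intro i ρ σ hρ hσ hσi hle
    have hc : 0 ≤ lam * (Δt / Δx) :=
      mul_nonneg hlam (div_nonneg hΔt.le hΔxpos.le)
    -- flux on the right of cell i decreases
    have hF : numFlux N Δx V m1 m2 U' σ ↑i ≤ numFlux N Δx V m1 m2 U' ρ ↑i := by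
      by_cases h : (i : ℕ) + 1 < N
      · have hne : (⟨(i : ℕ) + 1, h⟩ : Fin N) ≠ i := by
          intro he
          have := congrArg Fin.val he
          simp at this
        have hb : ρ ⟨(i : ℕ) + 1, h⟩ ≤ σ ⟨(i : ℕ) + 1, h⟩ := hle _ hne
        have hvel : vel N Δx V U' σ ↑i ≤ vel N Δx V U' ρ ↑i := by
          rw [vel, dif_pos h, vel, dif_pos h]
          simp only [Fin.eta, hσi]
          have hU : U' (ρ ⟨(i : ℕ) + 1, h⟩) ≤ U' (σ ⟨(i : ℕ) + 1, h⟩) :=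
            hU'_mono (hρ _) (hσ _) hb
          have : ((U' (ρ ⟨(i : ℕ) + 1, h⟩) + V ⟨(i : ℕ) + 1, h⟩) -
              (U' (ρ i) + V i)) / Δx ≤
              ((U' (σ ⟨(i : ℕ) + 1, h⟩) + V ⟨(i : ℕ) + 1, h⟩) -
              (U' (ρ i) + V i)) / Δx :=
            div_le_div_of_nonneg_right (by linarith) hΔxpos.le
          linarith
        rw [numFlux, dif_pos h, numFlux, dif_pos h]
        simp only [Fin.eta, hσi]
        exact flux_pair_mono_right (hm1_nonneg _ (hρ i)) (hm2_nonneg _ (hρ i))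
          (hm2_nonneg _ (hσ _)) (hm2_anti (hρ _) (hσ _) hb)
          (hm1_nonneg _ (hρ _)) (hm1_mono (hρ _) (hσ _) hb) hvel
      · rw [numFlux, dif_neg h, numFlux, dif_neg h]
    -- flux on the left of cell i increases
    have hG : (i : ℕ) ≠ 0 →
        numFlux N Δx V m1 m2 U' ρ ((i : ℕ) - 1) ≤
        numFlux N Δx V m1 m2 U' σ ((i : ℕ) - 1) := by
      intro h0
      have h : (i : ℕ) - 1 + 1 < N := by
        have := i.isLt; omega
      have heq : (⟨(i : ℕ) - 1 + 1, h⟩ : Fin N) = i := Fin.ext (by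
        have := i.isLt
        simp; omega)
      have hne : (⟨(i : ℕ) - 1, Nat.lt_of_succ_lt h⟩ : Fin N) ≠ i := by
        intro he
        have := congrArg Fin.val he
        simp at this
        omega
      have ha : ρ ⟨(i : ℕ) - 1, Nat.lt_of_succ_lt h⟩ ≤
          σ ⟨(i : ℕ) - 1, Nat.lt_of_succ_lt h⟩ := hle _ hne
      have hvel : vel N Δx V U' ρ ((i : ℕ) - 1) ≤ vel N Δx V U' σ ((i : ℕ) - 1) := by
        rw [vel, dif_pos h, vel, dif_pos h]
        rw [heq, hσi]
        have hU : U' (ρ ⟨(i : ℕ) - 1, Nat.lt_of_succ_lt h⟩) ≤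
            U' (σ ⟨(i : ℕ) - 1, Nat.lt_of_succ_lt h⟩) := hU'_mono (hρ _) (hσ _) ha
        have : ((U' (ρ i) + V i) -
            (U' (σ ⟨(i : ℕ) - 1, Nat.lt_of_succ_lt h⟩) +
              V ⟨(i : ℕ) - 1, Nat.lt_of_succ_lt h⟩)) / Δx ≤
            ((U' (ρ i) + V i) -
            (U' (ρ ⟨(i : ℕ) - 1, Nat.lt_of_succ_lt h⟩) +
              V ⟨(i : ℕ) - 1, Nat.lt_of_succ_lt h⟩)) / Δx :=
          div_le_div_of_nonneg_right (by linarith) hΔxpos.le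
        linarith
      rw [numFlux, dif_pos h, numFlux, dif_pos h]
      rw [heq, hσi]
      exact flux_pair_mono_left (hm2_nonneg _ (hρ i)) (hm1_nonneg _ (hρ i))
        (hm1_nonneg _ (hρ _)) (hm1_mono (hρ _) (hσ _) ha)
        (hm2_nonneg _ (hσ _)) (hm2_anti (hρ _) (hσ _) ha) hvel
    have hX : (numFlux N Δx V m1 m2 U' σ ↑i -
          if (i : ℕ) = 0 then 0 else numFlux N Δx V m1 m2 U' σ ((i : ℕ) - 1)) ≤
        (numFlux N Δx V m1 m2 U' ρ ↑i -
          if (i : ℕ) = 0 then 0 else numFlux N Δx V m1 m2 U' ρ ((i : ℕ) - 1)) := by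
      split_ifs with h0
      · linarith
      · linarith [hG h0]
    simp only [Hmap, hσi]
    exact add_le_add_right (mul_le_mul_of_nonneg_left hX hc) _
end

section
/- Assume m¹, m² : [0,α] → [0,∞), that U : [0,α] → ℝ is convex and differentiable on (0,α) with derivative U′, and let λ ≥ 0. If ρ ∈ (0,α)^N and ρⁿ ∈ [0,α]^N satisfy H(λ,ρ) = ρⁿ, then E[ρ] ≤ E[ρⁿ]; more precisely, E[ρⁿ] − E[ρ] ≥ λ·Δt·Δx·Σ_{i=1}^{N−1} ( m¹(ρ_i)m²(ρ_{i+1})·(max(v_{i+1/2}(ρ),0))² + m¹(ρ_{i+1})m²(ρ_i)·(min(v_{i+1/2}(ρ),0))² ). -/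
open Set Finset

/-- The discrete free energy E[ρ] = Δx·Σᵢ (U(ρᵢ) + Vᵢ ρᵢ). -/
noncomputable def Ener (N : ℕ) (Δx : ℝ) (V : Fin N → ℝ) (U : ℝ → ℝ)
    (ρ : Fin N → ℝ) : ℝ :=
  Δx * ∑ i, (U (ρ i) + V i * ρ i)

lemma support_line {α : ℝ} {U : ℝ → ℝ} {f' x y : ℝ}
    (hc : ConvexOn ℝ (Set.Icc 0 α) U) (hx : x ∈ Set.Ioo 0 α)
    (hd : HasDerivAt U f' x) (hy : y ∈ Set.Icc 0 α) :
    f' * (y - x) ≤ U y - U x := by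
  have hxI : x ∈ Set.Icc 0 α := ⟨hx.1.le, hx.2.le⟩
  rcases lt_trichotomy x y with h | h | h
  · have hs := hc.le_slope_of_hasDerivAt hxI hy h hd
    rw [slope_def_field] at hs
    have hyx : 0 < y - x := sub_pos.2 h
    have := mul_le_mul_of_nonneg_right hs hyx.le
    calc f' * (y - x) ≤ (U y - U x) / (y - x) * (y - x) := this
      _ = U y - U x := by field_simp
  · simp [h]
  · have hs := hc.slope_le_of_hasDerivAt hy hxI h hd
    rw [slope_def_field] at hs
    have hxy : 0 < x - y := sub_pos.2 h
    have := mul_le_mul_of_nonneg_right hs hxy.le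
    have heq : (U x - U y) / (x - y) * (x - y) = U x - U y := by field_simp
    rw [heq] at this
    nlinarith
lemma vmul (v a b : ℝ) :
    v * (a * max v 0 + b * min v 0) = a * max v 0 ^ 2 + b * min v 0 ^ 2 := by
  rcases le_total v 0 with h | h
  · rw [max_eq_right h, min_eq_left h]; ring
  · rw [max_eq_left h, min_eq_right h]; ring

/-- Free-energy dissipation of one implicit Euler step of the upwind scheme. -/
theorem scheme_free_energy_dissipation
    (N : ℕ) (hN : 2 ≤ N) (Δx Δt : ℝ) (hΔx : Δx = 1 / N) (hΔt : 0 < Δt)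
    (α : ℝ) (hα : 0 < α) (V : Fin N → ℝ)
    (m1 m2 : ℝ → ℝ)
    (hm1_nonneg : ∀ s ∈ Icc 0 α, 0 ≤ m1 s) (hm2_nonneg : ∀ s ∈ Icc 0 α, 0 ≤ m2 s)
    (U U' : ℝ → ℝ) (hU_conv : ConvexOn ℝ (Icc 0 α) U)
    (hU_deriv : ∀ s ∈ Ioo 0 α, HasDerivAt U (U' s) s)
    (lam : ℝ) (hlam : 0 ≤ lam)
    (ρ ρn : Fin N → ℝ) (hρ : ∀ i, ρ i ∈ Ioo 0 α) (hρn : ∀ i, ρn i ∈ Icc 0 α)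
    (hstep : Hmap N Δx Δt V m1 m2 U' lam ρ = ρn) :
    Ener N Δx V U ρ ≤ Ener N Δx V U ρn ∧
    lam * Δt * Δx * (∑ k ∈ Finset.range (N - 1),
      if h : k + 1 < N then
        m1 (ρ ⟨k, Nat.lt_of_succ_lt h⟩) * m2 (ρ ⟨k + 1, h⟩) *
            (max (vel N Δx V U' ρ k) 0) ^ 2 +
          m1 (ρ ⟨k + 1, h⟩) * m2 (ρ ⟨k, Nat.lt_of_succ_lt h⟩) *
            (min (vel N Δx V U' ρ k) 0) ^ 2
      else 0)
      ≤ Ener N Δx V U ρn - Ener N Δx V U ρ := by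
  have hN0 : (0:ℝ) < (N:ℝ) := by positivity
  have hΔx0 : 0 < Δx := by rw [hΔx]; positivity
  have hΔxne : Δx ≠ 0 := ne_of_gt hΔx0
  set ξ : ℕ → ℝ := fun k => if h : k < N then U' (ρ ⟨k, h⟩) + V ⟨k, h⟩ else 0 with hξ
  set F : ℕ → ℝ := numFlux N Δx V m1 m2 U' ρ with hF
  -- Step A: the implicit Euler relation per-component
  have hA : ∀ i : Fin N, ρn i - ρ i =
      lam * (Δt / Δx) * (F (i : ℕ) - if (i : ℕ) = 0 then 0 else F ((i : ℕ) - 1)) := by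
    intro i
    have h := congrFun hstep i
    rw [Hmap] at h
    rw [← h]; ring
  -- Supporting line inequality
  have hsup : ∀ i : Fin N, ξ (i : ℕ) * (ρn i - ρ i) ≤
      (U (ρn i) + V i * ρn i) - (U (ρ i) + V i * ρ i) := by
    intro i
    have h1 : U' (ρ i) * (ρn i - ρ i) ≤ U (ρn i) - U (ρ i) :=
      support_line hU_conv (hρ i) (hU_deriv _ (hρ i)) (hρn i)
    have hξi : ξ (i : ℕ) = U' (ρ i) + V i := by
      simp [hξ, i.isLt]
    rw [hξi]; nlinarith [h1]
  have hEdiff : Ener N Δx V U ρn - Ener N Δx V U ρ =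
      Δx * ∑ i, ((U (ρn i) + V i * ρn i) - (U (ρ i) + V i * ρ i)) := by
    rw [Ener, Ener, ← mul_sub, ← Finset.sum_sub_distrib]
  have hmain_le : Δx * ∑ i : Fin N, ξ (i : ℕ) * (ρn i - ρ i) ≤
      Ener N Δx V U ρn - Ener N Δx V U ρ := by
    rw [hEdiff]
    exact mul_le_mul_of_nonneg_left (Finset.sum_le_sum fun i _ => hsup i) hΔx0.le
  -- summation by parts
  have hFtop : F (N - 1) = 0 := by
    rw [hF, numFlux, dif_neg (by omega)]
  have hN1 : N = (N - 1) + 1 := by omega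
  have hSBP : ∑ i ∈ Finset.range N, ξ i * (F i - if i = 0 then 0 else F (i - 1))
      = ∑ k ∈ Finset.range (N - 1), (ξ k - ξ (k + 1)) * F k := by
    have e1 : ∑ i ∈ Finset.range N, ξ i * (F i - if i = 0 then 0 else F (i - 1))
        = ∑ i ∈ Finset.range N, ξ i * F i
          - ∑ i ∈ Finset.range N, ξ i * (if i = 0 then 0 else F (i - 1)) := by
      rw [← Finset.sum_sub_distrib]
      exact Finset.sum_congr rfl fun i _ => by ring
    have e2 : ∑ i ∈ Finset.range N, ξ i * F i = ∑ i ∈ Finset.range (N - 1), ξ i * F i := by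
      rw [hN1, Finset.sum_range_succ, ← hN1, hFtop, mul_zero, add_zero]
    have e3 : ∑ i ∈ Finset.range N, ξ i * (if i = 0 then 0 else F (i - 1))
        = ∑ i ∈ Finset.range (N - 1), ξ (i + 1) * F i := by
      rw [hN1, Finset.sum_range_succ']
      simp
    rw [e1, e2, e3, ← Finset.sum_sub_distrib]
    exact Finset.sum_congr rfl fun i _ => by ring
  -- each summand equals Δx times the dissipation term
  have hterm : ∀ k ∈ Finset.range (N - 1), (ξ k - ξ (k + 1)) * F k =
      Δx * (if h : k + 1 < N then
        m1 (ρ ⟨k, Nat.lt_of_succ_lt h⟩) * m2 (ρ ⟨k + 1, h⟩) *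
            (max (vel N Δx V U' ρ k) 0) ^ 2 +
          m1 (ρ ⟨k + 1, h⟩) * m2 (ρ ⟨k, Nat.lt_of_succ_lt h⟩) *
            (min (vel N Δx V U' ρ k) 0) ^ 2
      else 0) := by
    intro k hk
    rw [Finset.mem_range] at hk
    have h1 : k + 1 < N := by omega
    have h0 : k < N := by omega
    rw [dif_pos h1]
    have hv : ξ k - ξ (k + 1) = Δx * vel N Δx V U' ρ k := by
      rw [vel, dif_pos h1]
      simp only [hξ, dif_pos h0, dif_pos h1]
      field_simp
      ring
    rw [hv, hF, numFlux, dif_pos h1, mul_assoc]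
    congr 1
    exact vmul _ _ _
  -- the key identity
  set T := ∑ k ∈ Finset.range (N - 1),
      (if h : k + 1 < N then
        m1 (ρ ⟨k, Nat.lt_of_succ_lt h⟩) * m2 (ρ ⟨k + 1, h⟩) *
            (max (vel N Δx V U' ρ k) 0) ^ 2 +
          m1 (ρ ⟨k + 1, h⟩) * m2 (ρ ⟨k, Nat.lt_of_succ_lt h⟩) *
            (min (vel N Δx V U' ρ k) 0) ^ 2
      else 0) with hT
  have hsum_eq : ∑ i : Fin N, ξ (i : ℕ) * (ρn i - ρ i) = lam * (Δt / Δx) * (Δx * T) := by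
    have e := Fin.sum_univ_eq_sum_range
      (fun k => lam * (Δt / Δx) * (ξ k * (F k - if k = 0 then 0 else F (k - 1)))) N
    calc ∑ i : Fin N, ξ (i : ℕ) * (ρn i - ρ i)
        = ∑ i : Fin N, lam * (Δt / Δx) *
            (ξ (i : ℕ) * (F (i : ℕ) - if (i : ℕ) = 0 then 0 else F ((i : ℕ) - 1))) := by
          refine Finset.sum_congr rfl fun i _ => ?_
          rw [hA i]; ring
      _ = ∑ i ∈ Finset.range N, lam * (Δt / Δx) *
            (ξ i * (F i - if i = 0 then 0 else F (i - 1))) := e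
      _ = lam * (Δt / Δx) * ∑ i ∈ Finset.range N,
            (ξ i * (F i - if i = 0 then 0 else F (i - 1))) := (Finset.mul_sum _ _ _).symm
      _ = lam * (Δt / Δx) * ∑ k ∈ Finset.range (N - 1), (ξ k - ξ (k + 1)) * F k := by
          rw [hSBP]
      _ = lam * (Δt / Δx) * (Δx * T) := by
          rw [Finset.sum_congr rfl hterm, ← Finset.mul_sum]
  have hkey : lam * Δt * Δx * T = Δx * ∑ i : Fin N, ξ (i : ℕ) * (ρn i - ρ i) := by
    rw [hsum_eq]; field_simp
  have hT0 : (0:ℝ) ≤ T := by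
    refine Finset.sum_nonneg fun k hk => ?_
    rw [Finset.mem_range] at hk
    have h1 : k + 1 < N := by omega
    rw [dif_pos h1]
    have hm : ∀ j : Fin N, 0 ≤ m1 (ρ j) ∧ 0 ≤ m2 (ρ j) := fun j =>
      ⟨hm1_nonneg _ (Set.Ioo_subset_Icc_self (hρ j)), hm2_nonneg _ (Set.Ioo_subset_Icc_self (hρ j))⟩
    have a1 := (hm ⟨k, Nat.lt_of_succ_lt h1⟩).1
    have a2 := (hm ⟨k + 1, h1⟩).2
    have a3 := (hm ⟨k + 1, h1⟩).1
    have a4 := (hm ⟨k, Nat.lt_of_succ_lt h1⟩).2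
    positivity
  have hfinal : lam * Δt * Δx * T ≤ Ener N Δx V U ρn - Ener N Δx V U ρ := by
    rw [hkey]; exact hmain_le
  have hTpos : 0 ≤ lam * Δt * Δx * T := by positivity
  exact ⟨by linarith, hfinal⟩
end

section
/- Assume U : [0,α] → ℝ is convex and continuously differentiable on [0,α] with derivative U′, that m¹ : [0,α] → [0,∞) is continuous, nondecreasing and satisfies m¹(0) = 0, and that m² : [0,α] → [0,∞) is continuous, nonincreasing and satisfies m²(α) = 0. Then for every ρⁿ ∈ 𝒜_Δ = [0,α]^N there exists exactly one ρ ∈ 𝒜_Δ such that H(ρ) = ρⁿ (well-posedness of one step of the implicit finite-volume scheme). -/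
open Set Finset

namespace SWP

variable {N : ℕ} {Δx Δt α : ℝ} {V : Fin N → ℝ} {m1 m2 U' : ℝ → ℝ}

lemma flux_pair_mono (hΔx : 0 < Δx)
    (hm1_mono : MonotoneOn m1 (Icc 0 α)) (hm1_nonneg : ∀ s ∈ Icc 0 α, 0 ≤ m1 s)
    (hm2_anti : AntitoneOn m2 (Icc 0 α)) (hm2_nonneg : ∀ s ∈ Icc 0 α, 0 ≤ m2 s)
    (hU'_mono : MonotoneOn U' (Icc 0 α))
    {ρ σ : Fin N → ℝ} (hρ : ∀ i, ρ i ∈ Icc 0 α) (hσ : ∀ i, σ i ∈ Icc 0 α)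
    {k : ℕ} (hk : k + 1 < N)
    (h1 : σ ⟨k, Nat.lt_of_succ_lt hk⟩ ≤ ρ ⟨k, Nat.lt_of_succ_lt hk⟩)
    (h2 : ρ ⟨k + 1, hk⟩ ≤ σ ⟨k + 1, hk⟩) :
    numFlux N Δx V m1 m2 U' σ k ≤ numFlux N Δx V m1 m2 U' ρ k := by
  simp only [numFlux, vel, dif_pos hk]
  set i0 : Fin N := ⟨k, Nat.lt_of_succ_lt hk⟩ with hi0
  set i1 : Fin N := ⟨k + 1, hk⟩ with hi1
  set a := σ i0
  set a' := ρ i0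
  set b := σ i1
  set b' := ρ i1
  set v := -(((U' b + V i1) - (U' a + V i0)) / Δx) with hv_def
  set v' := -(((U' b' + V i1) - (U' a' + V i0)) / Δx) with hv'_def
  have haI : a ∈ Icc 0 α := hσ i0
  have ha'I : a' ∈ Icc 0 α := hρ i0
  have hbI : b ∈ Icc 0 α := hσ i1
  have hb'I : b' ∈ Icc 0 α := hρ i1
  have hv : v ≤ v' := by
    have h1' : U' a ≤ U' a' := hU'_mono haI ha'I h1
    have h2' : U' b' ≤ U' b := hU'_mono hb'I hbI h2
    rw [hv_def, hv'_def]
    have hle : (U' b' + V i1) - (U' a' + V i0) ≤ (U' b + V i1) - (U' a + V i0) := by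
      linarith
    exact neg_le_neg ((div_le_div_iff_of_pos_right hΔx).mpr hle)
  have hmax : max v 0 ≤ max v' 0 := max_le_max hv le_rfl
  have hmin : min v 0 ≤ min v' 0 := min_le_min hv le_rfl
  have t1 : m1 a * m2 b * max v 0 ≤ m1 a' * m2 b' * max v' 0 := by
    have hma : m1 a ≤ m1 a' := hm1_mono haI ha'I h1
    have hmb : m2 b ≤ m2 b' := hm2_anti hb'I hbI h2
    exact mul_le_mul (mul_le_mul hma hmb (hm2_nonneg _ hbI) (hm1_nonneg _ ha'I))
      hmax (le_max_right _ _)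
      (mul_nonneg (hm1_nonneg _ ha'I) (hm2_nonneg _ hb'I))
  have t2 : m1 b * m2 a * min v 0 ≤ m1 b' * m2 a' * min v' 0 := by
    have hmb : m1 b' ≤ m1 b := hm1_mono hb'I hbI h2
    have hma : m2 a' ≤ m2 a := hm2_anti haI ha'I h1
    have coeff : m1 b' * m2 a' ≤ m1 b * m2 a :=
      mul_le_mul hmb hma (hm2_nonneg _ ha'I) (hm1_nonneg _ hbI)
    calc m1 b * m2 a * min v 0 ≤ m1 b' * m2 a' * min v 0 :=
          mul_le_mul_of_nonpos_right coeff (min_le_right v 0)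
      _ ≤ m1 b' * m2 a' * min v' 0 :=
          mul_le_mul_of_nonneg_left hmin
            (mul_nonneg (hm1_nonneg _ hb'I) (hm2_nonneg _ ha'I))
  exact add_le_add t1 t2

lemma Hmap_mono_offdiag (hΔx : 0 < Δx) (hΔt : 0 ≤ Δt)
    (hm1_mono : MonotoneOn m1 (Icc 0 α)) (hm1_nonneg : ∀ s ∈ Icc 0 α, 0 ≤ m1 s)
    (hm2_anti : AntitoneOn m2 (Icc 0 α)) (hm2_nonneg : ∀ s ∈ Icc 0 α, 0 ≤ m2 s)
    (hU'_mono : MonotoneOn U' (Icc 0 α))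
    {ρ τ : Fin N → ℝ} (hρ : ∀ i, ρ i ∈ Icc 0 α) (hτ : ∀ i, τ i ∈ Icc 0 α)
    (hle : ∀ j, ρ j ≤ τ j) {i : Fin N} (hi : τ i = ρ i) :
    Hmap N Δx Δt V m1 m2 U' 1 τ i ≤ Hmap N Δx Δt V m1 m2 U' 1 ρ i := by
  have hc : 0 ≤ Δt / Δx := div_nonneg hΔt hΔx.le
  have hA : numFlux N Δx V m1 m2 U' τ i ≤ numFlux N Δx V m1 m2 U' ρ i := by
    by_cases hk : (i : ℕ) + 1 < N
    · refine flux_pair_mono hΔx hm1_mono hm1_nonneg hm2_anti hm2_nonneg hU'_mono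
        hρ hτ hk ?_ ?_
      · rw [Fin.eta]; exact hi.le
      · exact hle _
    · simp [numFlux, hk]
  have hB : (if (i : ℕ) = 0 then (0:ℝ) else numFlux N Δx V m1 m2 U' ρ ((i:ℕ) - 1)) ≤
      (if (i : ℕ) = 0 then (0:ℝ) else numFlux N Δx V m1 m2 U' τ ((i:ℕ) - 1)) := by
    by_cases h0 : (i : ℕ) = 0
    · simp [h0]
    · simp only [if_neg h0]
      have hpos : 0 < (i : ℕ) := Nat.pos_of_ne_zero h0
      have hk : (i : ℕ) - 1 + 1 < N := by
        have := i.isLt; omega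
      have heq : (⟨(i:ℕ) - 1 + 1, hk⟩ : Fin N) = i := Fin.ext (by simp; omega)
      refine flux_pair_mono hΔx hm1_mono hm1_nonneg hm2_anti hm2_nonneg hU'_mono
        hτ hρ hk ?_ ?_
      · exact hle _
      · rw [heq]; exact hi.le
  simp only [Hmap, one_mul, hi]
  have hsub : (numFlux N Δx V m1 m2 U' τ i -
        if (i : ℕ) = 0 then (0:ℝ) else numFlux N Δx V m1 m2 U' τ ((i:ℕ) - 1)) ≤
      (numFlux N Δx V m1 m2 U' ρ i -
        if (i : ℕ) = 0 then (0:ℝ) else numFlux N Δx V m1 m2 U' ρ ((i:ℕ) - 1)) :=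
    sub_le_sub hA hB
  have := mul_le_mul_of_nonneg_left hsub hc
  linarith

lemma Hmap_ge_alpha (hΔx : 0 < Δx) (hΔt : 0 ≤ Δt)
    (hm1_nonneg : ∀ s ∈ Icc 0 α, 0 ≤ m1 s)
    (hm2_nonneg : ∀ s ∈ Icc 0 α, 0 ≤ m2 s) (hm2α : m2 α = 0)
    {ρ : Fin N → ℝ} (hρ : ∀ i, ρ i ∈ Icc 0 α) {i : Fin N} (hi : ρ i = α) :
    α ≤ Hmap N Δx Δt V m1 m2 U' 1 ρ i := by
  have hc : 0 ≤ Δt / Δx := div_nonneg hΔt hΔx.le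
  have hαI : α ∈ Icc 0 α := ⟨hi ▸ (hρ i).1, le_rfl⟩
  have hA : 0 ≤ numFlux N Δx V m1 m2 U' ρ i := by
    by_cases hk : (i : ℕ) + 1 < N
    · simp only [numFlux, dif_pos hk, Fin.eta, hi, hm2α, mul_zero, zero_mul, add_zero]
      exact mul_nonneg (mul_nonneg (hm1_nonneg _ hαI)
        (hm2_nonneg _ (hρ _))) (le_max_right _ _)
    · simp [numFlux, hk]
  have hB : (if (i : ℕ) = 0 then (0:ℝ) else numFlux N Δx V m1 m2 U' ρ ((i:ℕ) - 1)) ≤ 0 := by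
    by_cases h0 : (i : ℕ) = 0
    · simp [h0]
    · simp only [if_neg h0]
      have hk : (i : ℕ) - 1 + 1 < N := by have := i.isLt; omega
      have heq : (⟨(i:ℕ) - 1 + 1, hk⟩ : Fin N) = i := Fin.ext (by simp; omega)
      simp only [numFlux, dif_pos hk, heq, hi, hm2α, mul_zero, zero_mul, add_zero, zero_add]
      exact mul_nonpos_of_nonneg_of_nonpos
        (mul_nonneg (hm1_nonneg _ hαI) (hm2_nonneg _ (hρ _)))
        (min_le_right _ 0)
  have hnn : 0 ≤ (Δt / Δx) * (numFlux N Δx V m1 m2 U' ρ i -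
      if (i : ℕ) = 0 then (0:ℝ) else numFlux N Δx V m1 m2 U' ρ ((i:ℕ) - 1)) :=
    mul_nonneg hc (sub_nonneg.mpr (le_trans hB hA))
  simp only [Hmap, one_mul, hi]
  linarith

lemma le_of_Hmap_eq (hN : 2 ≤ N) (hΔx : 0 < Δx) (hΔt : 0 < Δt)
    (hm1_mono : MonotoneOn m1 (Icc 0 α)) (hm1_nonneg : ∀ s ∈ Icc 0 α, 0 ≤ m1 s)
    (hm2_anti : AntitoneOn m2 (Icc 0 α)) (hm2_nonneg : ∀ s ∈ Icc 0 α, 0 ≤ m2 s)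
    (hU'_mono : MonotoneOn U' (Icc 0 α))
    {ρ σ : Fin N → ℝ} (hρ : ∀ i, ρ i ∈ Icc 0 α) (hσ : ∀ i, σ i ∈ Icc 0 α)
    (hH : ∀ i, Hmap N Δx Δt V m1 m2 U' 1 ρ i = Hmap N Δx Δt V m1 m2 U' 1 σ i) :
    ∀ i, ρ i ≤ σ i := by
  by_contra hcon
  push_neg at hcon
  obtain ⟨i0, hi0⟩ := hcon
  have hc : 0 < Δt / Δx := div_pos hΔt hΔx
  set W : ℕ → ℝ := fun k => if h : k < N then (if σ ⟨k, h⟩ < ρ ⟨k, h⟩ then 1 else 0) else 0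
    with hW_def
  set G : ℕ → ℝ := fun k =>
    numFlux N Δx V m1 m2 U' ρ k - numFlux N Δx V m1 m2 U' σ k with hG_def
  have hG_last : G (N - 1) = 0 := by
    have h : ¬ (N - 1 + 1 < N) := by omega
    simp [hG_def, numFlux, h]
  -- each interface term is nonneg
  have hterm : ∀ k, k < N - 1 → 0 ≤ (W k - W (k + 1)) * G k := by
    intro k hkM
    have hkN : k < N := by omega
    have hk1N : k + 1 < N := by omega
    have hWk : W k = if σ ⟨k, hkN⟩ < ρ ⟨k, hkN⟩ then 1 else 0 := by
      simp [hW_def, hkN]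
    have hWk1 : W (k + 1) = if σ ⟨k + 1, hk1N⟩ < ρ ⟨k + 1, hk1N⟩ then 1 else 0 := by
      simp [hW_def, hk1N]
    by_cases hA : σ ⟨k, hkN⟩ < ρ ⟨k, hkN⟩ <;>
      by_cases hB : σ ⟨k + 1, hk1N⟩ < ρ ⟨k + 1, hk1N⟩
    · rw [hWk, hWk1, if_pos hA, if_pos hB]; simp
    · rw [hWk, hWk1, if_pos hA, if_neg hB]
      have hGk : 0 ≤ G k := by
        have := flux_pair_mono (V := V) hΔx hm1_mono hm1_nonneg hm2_anti hm2_nonneg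
          hU'_mono hρ hσ hk1N hA.le (not_lt.mp hB)
        simp only [hG_def]; linarith
      linarith
    · rw [hWk, hWk1, if_neg hA, if_pos hB]
      have hGk : G k ≤ 0 := by
        have := flux_pair_mono (V := V) hΔx hm1_mono hm1_nonneg hm2_anti hm2_nonneg
          hU'_mono hσ hρ hk1N (not_lt.mp hA) hB.le
        simp only [hG_def]; linarith
      nlinarith
    · rw [hWk, hWk1, if_neg hA, if_neg hB]; simp
  -- the total sum vanishes
  have hsum0 : ∑ i : Fin N, W i * (Hmap N Δx Δt V m1 m2 U' 1 ρ i -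
      Hmap N Δx Δt V m1 m2 U' 1 σ i) = 0 :=
    Finset.sum_eq_zero fun i _ => by rw [hH i]; ring
  have hexpand : ∀ i : Fin N, W i * (Hmap N Δx Δt V m1 m2 U' 1 ρ i -
      Hmap N Δx Δt V m1 m2 U' 1 σ i) =
      W i * (ρ i - σ i) + (Δt / Δx) *
        (W i * (G i - if (i : ℕ) = 0 then 0 else G ((i : ℕ) - 1))) := by
    intro i
    simp only [Hmap, hG_def, one_mul]
    by_cases h0 : (i : ℕ) = 0 <;> simp only [h0, if_true, if_false, reduceIte] <;> ring
  rw [Finset.sum_congr rfl fun i _ => hexpand i, Finset.sum_add_distrib,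
    ← Finset.mul_sum] at hsum0
  -- first sum is positive
  have hS1 : 0 < ∑ i : Fin N, W i * (ρ i - σ i) := by
    refine Finset.sum_pos' (fun i _ => ?_) ⟨i0, Finset.mem_univ _, ?_⟩
    · have hiN : (i : ℕ) < N := i.isLt
      simp only [hW_def, hiN, dif_pos, Fin.eta]
      by_cases h : σ i < ρ i
      · rw [if_pos h]; nlinarith
      · rw [if_neg h]; simp
    · have hiN : (i0 : ℕ) < N := i0.isLt
      simp only [hW_def, hiN, dif_pos, Fin.eta, if_pos hi0]
      nlinarith
  -- second sum is nonnegative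
  have hS2 : 0 ≤ ∑ i : Fin N, W i * (G i - if (i : ℕ) = 0 then 0 else G ((i : ℕ) - 1)) := by
    obtain ⟨M, hM⟩ : ∃ M, N = M + 1 := ⟨N - 1, by omega⟩
    subst hM
    simp only [Nat.add_sub_cancel] at hG_last hterm
    have hconv : ∑ i : Fin (M + 1), W i * (G i - if (i : ℕ) = 0 then 0 else G ((i : ℕ) - 1)) =
        ∑ k ∈ Finset.range (M + 1),
          (fun k : ℕ => W k * (G k - if k = 0 then 0 else G (k - 1))) k :=
      Fin.sum_univ_eq_sum_range (fun k : ℕ => W k * (G k - if k = 0 then 0 else G (k - 1)))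
        (M + 1)
    rw [hconv]
    have hsplit : ∀ k : ℕ, W k * (G k - if k = 0 then 0 else G (k - 1)) =
        W k * G k - (if k = 0 then 0 else W k * G (k - 1)) := by
      intro k
      by_cases h0 : k = 0 <;> simp only [h0, if_true, if_false, reduceIte] <;> ring
    calc (0:ℝ) ≤ ∑ k ∈ Finset.range M, (W k - W (k + 1)) * G k :=
          Finset.sum_nonneg fun k hk => hterm k (Finset.mem_range.mp hk)
      _ = ∑ k ∈ Finset.range (M + 1),
          (fun k : ℕ => W k * (G k - if k = 0 then 0 else G (k - 1))) k := by
          simp only [hsplit]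
          rw [Finset.sum_sub_distrib, Finset.sum_range_succ (fun k => W k * G k),
            Finset.sum_range_succ' (fun k => if k = 0 then (0:ℝ) else W k * G (k - 1))]
          simp only [hG_last, mul_zero, add_zero, Nat.succ_ne_zero, if_false, if_pos rfl,
            Nat.add_sub_cancel, reduceIte]
          rw [← Finset.sum_sub_distrib]
          exact Finset.sum_congr rfl fun k _ => by ring
  have hfin := mul_nonneg hc.le hS2
  linarith

lemma numFlux_contOn (hU'_cont : ContinuousOn U' (Icc 0 α))
    (hm1_cont : ContinuousOn m1 (Icc 0 α)) (hm2_cont : ContinuousOn m2 (Icc 0 α))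
    (k : ℕ) :
    ContinuousOn (fun ρ : Fin N → ℝ => numFlux N Δx V m1 m2 U' ρ k)
      {ρ : Fin N → ℝ | ∀ i, ρ i ∈ Icc 0 α} := by
  by_cases hk : k + 1 < N
  · simp only [numFlux, vel, dif_pos hk]
    have hev : ∀ (j : Fin N) (f : ℝ → ℝ), ContinuousOn f (Icc 0 α) →
        ContinuousOn (fun ρ : Fin N → ℝ => f (ρ j)) {ρ : Fin N → ℝ | ∀ i, ρ i ∈ Icc 0 α} :=
      fun j f hf => hf.comp (continuous_apply j).continuousOn fun ρ hρ => hρ j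
    have hvel : ContinuousOn (fun ρ : Fin N → ℝ =>
        -(((U' (ρ ⟨k + 1, hk⟩) + V ⟨k + 1, hk⟩) -
          (U' (ρ ⟨k, Nat.lt_of_succ_lt hk⟩) + V ⟨k, Nat.lt_of_succ_lt hk⟩)) / Δx))
        {ρ : Fin N → ℝ | ∀ i, ρ i ∈ Icc 0 α} :=
      ((((hev _ _ hU'_cont).add continuousOn_const).sub
        ((hev _ _ hU'_cont).add continuousOn_const)).div_const Δx).neg
    have hmax : ContinuousOn (fun ρ : Fin N → ℝ =>
        max (-(((U' (ρ ⟨k + 1, hk⟩) + V ⟨k + 1, hk⟩) -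
          (U' (ρ ⟨k, Nat.lt_of_succ_lt hk⟩) + V ⟨k, Nat.lt_of_succ_lt hk⟩)) / Δx)) 0)
        {ρ : Fin N → ℝ | ∀ i, ρ i ∈ Icc 0 α} := hvel.sup continuousOn_const
    have hmin : ContinuousOn (fun ρ : Fin N → ℝ =>
        min (-(((U' (ρ ⟨k + 1, hk⟩) + V ⟨k + 1, hk⟩) -
          (U' (ρ ⟨k, Nat.lt_of_succ_lt hk⟩) + V ⟨k, Nat.lt_of_succ_lt hk⟩)) / Δx)) 0)
        {ρ : Fin N → ℝ | ∀ i, ρ i ∈ Icc 0 α} := hvel.inf continuousOn_const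
    exact (((hev _ _ hm1_cont).mul (hev _ _ hm2_cont)).mul hmax).add
      (((hev _ _ hm1_cont).mul (hev _ _ hm2_cont)).mul hmin)
  · simp only [numFlux, dif_neg hk]
    exact continuousOn_const

lemma Hmap_contOn (hU'_cont : ContinuousOn U' (Icc 0 α))
    (hm1_cont : ContinuousOn m1 (Icc 0 α)) (hm2_cont : ContinuousOn m2 (Icc 0 α))
    (i : Fin N) :
    ContinuousOn (fun ρ : Fin N → ℝ => Hmap N Δx Δt V m1 m2 U' 1 ρ i)
      {ρ : Fin N → ℝ | ∀ i, ρ i ∈ Icc 0 α} := by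
  simp only [Hmap, one_mul]
  refine ContinuousOn.add (continuous_apply i).continuousOn ?_
  refine ContinuousOn.mul continuousOn_const ?_
  refine ContinuousOn.sub (numFlux_contOn hU'_cont hm1_cont hm2_cont _) ?_
  by_cases h0 : (i : ℕ) = 0
  · simp only [h0, if_true, reduceIte]
    exact continuousOn_const
  · simp only [if_neg h0]
    exact numFlux_contOn hU'_cont hm1_cont hm2_cont _

end SWP

/-- Well-posedness of one step of the implicit finite-volume scheme on 𝒜_Δ = [0,α]^N
when U ∈ C¹([0,α]). -/
theorem scheme_well_posedness_closed
    (N : ℕ) (hN : 2 ≤ N) (Δx Δt : ℝ) (hΔx : Δx = 1 / N) (hΔt : 0 < Δt)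
    (α : ℝ) (hα : 0 < α) (V : Fin N → ℝ)
    (U U' : ℝ → ℝ) (hU_conv : ConvexOn ℝ (Icc 0 α) U)
    (hU_deriv : ∀ s ∈ Icc 0 α, HasDerivWithinAt U (U' s) (Icc 0 α) s)
    (hU'_cont : ContinuousOn U' (Icc 0 α))
    (m1 m2 : ℝ → ℝ)
    (hm1_cont : ContinuousOn m1 (Icc 0 α)) (hm1_mono : MonotoneOn m1 (Icc 0 α))
    (hm1_nonneg : ∀ s ∈ Icc 0 α, 0 ≤ m1 s) (hm10 : m1 0 = 0)
    (hm2_cont : ContinuousOn m2 (Icc 0 α)) (hm2_anti : AntitoneOn m2 (Icc 0 α))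
    (hm2_nonneg : ∀ s ∈ Icc 0 α, 0 ≤ m2 s) (hm2α : m2 α = 0)
    (ρn : Fin N → ℝ) (hρn : ∀ i, ρn i ∈ Icc 0 α) :
    ∃! ρ : Fin N → ℝ, (∀ i, ρ i ∈ Icc 0 α) ∧ Hmap N Δx Δt V m1 m2 U' 1 ρ = ρn := by
    classical
  have hN0 : (0:ℝ) < N := by
    have h2 : 0 < N := by omega
    exact_mod_cast h2
  have hΔx0 : 0 < Δx := by rw [hΔx]; positivity
  haveI : Nonempty (Fin N) := ⟨⟨0, by omega⟩⟩
  -- U' is monotone on [0, α]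
  have hU'_mono : MonotoneOn U' (Icc 0 α) := by
    intro x hx y hy hxy
    rcases eq_or_lt_of_le hxy with rfl | h
    · exact le_rfl
    · exact (hU_conv.le_slope_of_hasDerivWithinAt hx hy h (hU_deriv x hx)).trans
        (hU_conv.slope_le_of_hasDerivWithinAt hx hy h (hU_deriv y hy))
  -- the set of subsolutions
  set Sub : Set (Fin N → ℝ) :=
    {ρ : Fin N → ℝ | (∀ i, ρ i ∈ Icc 0 α) ∧ ∀ i, Hmap N Δx Δt V m1 m2 U' 1 ρ i ≤ ρn i}
    with hSub_def
  have hSub_mem : ∀ ρ : Fin N → ℝ, ρ ∈ Sub ↔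
      ((∀ i, ρ i ∈ Icc 0 α) ∧ ∀ i, Hmap N Δx Δt V m1 m2 U' 1 ρ i ≤ ρn i) := by
    intro ρ; rw [hSub_def]; exact Iff.rfl
  have hHcont : ∀ i : Fin N,
      ContinuousOn (fun ρ : Fin N → ℝ => Hmap N Δx Δt V m1 m2 U' 1 ρ i)
        {ρ : Fin N → ℝ | ∀ i, ρ i ∈ Icc 0 α} :=
    fun i => SWP.Hmap_contOn hU'_cont hm1_cont hm2_cont i
  -- zero is a subsolution
  have hflux0 : ∀ k : ℕ, numFlux N Δx V m1 m2 U' (fun _ => 0) k = 0 := by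
    intro k
    by_cases hk : k + 1 < N
    · simp [numFlux, dif_pos hk, hm10]
    · simp [numFlux, hk]
  have hzero : (fun _ : Fin N => (0:ℝ)) ∈ Sub := by
    rw [hSub_mem]
    refine ⟨fun i => ⟨le_rfl, hα.le⟩, fun i => ?_⟩
    simpa [Hmap, hflux0] using (hρn i).1
  -- Sub is closed under pointwise max
  have hSub_sup : ∀ x ∈ Sub, ∀ y ∈ Sub, x ⊔ y ∈ Sub := by
    intro x hx y hy
    rw [hSub_mem] at hx hy ⊢
    have hbox : ∀ i, (x ⊔ y) i ∈ Icc 0 α := by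
      intro i
      rw [Pi.sup_apply]
      exact ⟨le_trans (hx.1 i).1 le_sup_left, sup_le (hx.1 i).2 (hy.1 i).2⟩
    refine ⟨hbox, fun i => ?_⟩
    rcases le_total (y i) (x i) with hle | hle
    · have hii : (x ⊔ y) i = x i := by rw [Pi.sup_apply]; exact sup_eq_left.mpr hle
      refine le_trans (SWP.Hmap_mono_offdiag hΔx0 hΔt.le hm1_mono hm1_nonneg hm2_anti
        hm2_nonneg hU'_mono hx.1 hbox (fun j => ?_) hii) (hx.2 i)
      rw [Pi.sup_apply]; exact le_sup_left
    · have hii : (x ⊔ y) i = y i := by rw [Pi.sup_apply]; exact sup_eq_right.mpr hle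
      refine le_trans (SWP.Hmap_mono_offdiag hΔx0 hΔt.le hm1_mono hm1_nonneg hm2_anti
        hm2_nonneg hU'_mono hy.1 hbox (fun j => ?_) hii) (hy.2 i)
      rw [Pi.sup_apply]; exact le_sup_right
  -- the candidate solution
  obtain ⟨g, hg_ub, hg_box, happrox⟩ :
      ∃ g : Fin N → ℝ, (∀ ρ ∈ Sub, ∀ i, ρ i ≤ g i) ∧ (∀ i, g i ∈ Icc 0 α) ∧
        ∀ n : ℕ, ∀ i : Fin N, ∃ ρ ∈ Sub, g i - 1 / ((n:ℝ) + 1) < ρ i := by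
    have hne : ∀ i : Fin N, ((fun ρ : Fin N → ℝ => ρ i) '' Sub).Nonempty :=
      fun i => ⟨0, ⟨(fun _ => 0), hzero, rfl⟩⟩
    have hbdd : ∀ i : Fin N, BddAbove ((fun ρ : Fin N → ℝ => ρ i) '' Sub) := by
      intro i
      refine ⟨α, ?_⟩
      rintro x ⟨ρ, hρ, rfl⟩
      exact (((hSub_mem ρ).mp hρ).1 i).2
    refine ⟨fun i => sSup ((fun ρ : Fin N → ℝ => ρ i) '' Sub), ?_, ?_, ?_⟩
    · exact fun ρ hρ i => le_csSup (hbdd i) ⟨ρ, hρ, rfl⟩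
    · intro i
      constructor
      · exact le_csSup (hbdd i) ⟨(fun _ => 0), hzero, rfl⟩
      · exact csSup_le (hne i) (by rintro x ⟨ρ, hρ, rfl⟩; exact (((hSub_mem ρ).mp hρ).1 i).2)
    · intro n i
      have hεpos : (0:ℝ) < 1 / ((n:ℝ) + 1) := by positivity
      have hlt : sSup ((fun ρ : Fin N → ℝ => ρ i) '' Sub) - 1 / ((n:ℝ) + 1) <
          sSup ((fun ρ : Fin N → ℝ => ρ i) '' Sub) := by linarith
      obtain ⟨x, hx, hxlt⟩ := exists_lt_of_lt_csSup (hne i) hlt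
      obtain ⟨ρ, hρS, rfl⟩ := hx
      exact ⟨ρ, hρS, hxlt⟩
  -- approximating sequence of subsolutions converging to g
  have hseq : ∀ n : ℕ, ∃ σ ∈ Sub, ∀ i, g i - 1 / ((n:ℝ) + 1) < σ i := by
    intro n
    choose r hr1 hr2 using happrox n
    refine ⟨Finset.univ.sup' Finset.univ_nonempty r,
      Finset.sup'_induction _ _ (fun a ha b hb => hSub_sup a ha b hb) (fun i _ => hr1 i),
      fun i => ?_⟩
    refine lt_of_lt_of_le (hr2 i) ?_
    exact Pi.le_def.mp (Finset.le_sup' r (Finset.mem_univ i)) i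
  choose σs hσSub hσ_ge using hseq
  have hσ_le : ∀ n i, σs n i ≤ g i := fun n i => hg_ub _ (hσSub n) i
  have htends : Filter.Tendsto σs Filter.atTop (nhds g) := by
    rw [tendsto_pi_nhds]
    intro i
    have hlow : Filter.Tendsto (fun n : ℕ => g i - 1 / ((n:ℝ) + 1))
        Filter.atTop (nhds (g i)) := by
      have h1 := Filter.Tendsto.const_sub (g i) tendsto_one_div_add_atTop_nhds_zero_nat
      simpa using h1
    exact tendsto_of_tendsto_of_tendsto_of_le_of_le hlow tendsto_const_nhds
      (fun n => (hσ_ge n i).le) (fun n => hσ_le n i)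
  -- g is itself a subsolution
  have hg_Sub : g ∈ Sub := by
    rw [hSub_mem]
    refine ⟨hg_box, fun i => ?_⟩
    have hT : Filter.Tendsto (fun n => Hmap N Δx Δt V m1 m2 U' 1 (σs n) i)
        Filter.atTop (nhds (Hmap N Δx Δt V m1 m2 U' 1 g i)) := by
      have hcw := (hHcont i) g hg_box
      refine hcw.tendsto.comp ?_
      rw [tendsto_nhdsWithin_iff]
      exact ⟨htends, Filter.Eventually.of_forall fun n => ((hSub_mem _).mp (hσSub n)).1⟩
    exact le_of_tendsto hT
      (Filter.Eventually.of_forall fun n => ((hSub_mem _).mp (hσSub n)).2 i)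
  have hg_Sub' := (hSub_mem g).mp hg_Sub
  -- g is a solution
  have hHg : ∀ i, Hmap N Δx Δt V m1 m2 U' 1 g i = ρn i := by
    intro i
    refine le_antisymm (hg_Sub'.2 i) ?_
    by_contra hcon
    push_neg at hcon
    have hgiα : g i < α := by
      rcases lt_or_eq_of_le (hg_box i).2 with h | h
      · exact h
      · exfalso
        have h1 := SWP.Hmap_ge_alpha (Δt := Δt) (V := V) (U' := U') hΔx0 hΔt.le hm1_nonneg
          hm2_nonneg hm2α hg_box h
        have h2 := (hρn i).2
        linarith
    have hφbox : ∀ t ∈ Icc (0:ℝ) α, ∀ j, Function.update g i t j ∈ Icc 0 α := by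
      intro t ht j
      rcases eq_or_ne j i with rfl | hji
      · simpa [Function.update_self] using ht
      · simpa [Function.update_of_ne hji] using hg_box j
    have hφcont : Continuous (fun t : ℝ => Function.update g i t) :=
      continuous_const.update i continuous_id
    have hc1' : Filter.Tendsto
        (fun t => Hmap N Δx Δt V m1 m2 U' 1 (Function.update g i t) i)
        (nhdsWithin (g i) (Icc (0:ℝ) α)) (nhds (Hmap N Δx Δt V m1 m2 U' 1 g i)) := by
      have hcomp := ((hHcont i).comp hφcont.continuousOn fun t ht => hφbox t ht)
      have hcw := (hcomp.continuousWithinAt (hg_box i)).tendsto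
      simp only [Function.comp_def, Function.comp_apply, Function.update_eq_self] at hcw
      exact hcw
    have hev : ∀ᶠ t in nhdsWithin (g i) (Icc (0:ℝ) α),
        Hmap N Δx Δt V m1 m2 U' 1 (Function.update g i t) i < ρn i :=
      hc1'.eventually_lt_const hcon
    have hIoc : Ioc (g i) α ∈ nhdsWithin (g i) (Ioi (g i)) :=
      Ioc_mem_nhdsGT_of_mem ⟨le_rfl, hgiα⟩
    have hmemIcc : Icc (0:ℝ) α ∈ nhdsWithin (g i) (Ioi (g i)) :=
      Filter.mem_of_superset hIoc (fun t ht => ⟨le_trans (hg_box i).1 ht.1.le, ht.2⟩)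
    have hle_f : nhdsWithin (g i) (Ioi (g i)) ≤ nhdsWithin (g i) (Icc (0:ℝ) α) :=
      nhdsWithin_le_of_mem hmemIcc
    have hev2 := (hev.filter_mono hle_f).and
      (Filter.eventually_of_mem hIoc fun t ht => ht)
    obtain ⟨t, ht1, ht2⟩ := hev2.exists
    have htIcc : t ∈ Icc (0:ℝ) α := ⟨le_trans (hg_box i).1 ht2.1.le, ht2.2⟩
    have hφtSub : Function.update g i t ∈ Sub := by
      rw [hSub_mem]
      refine ⟨hφbox t htIcc, fun j => ?_⟩
      rcases eq_or_ne j i with rfl | hji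
      · simpa [Function.update_self] using ht1.le
      · refine le_trans (SWP.Hmap_mono_offdiag hΔx0 hΔt.le hm1_mono hm1_nonneg hm2_anti
          hm2_nonneg hU'_mono hg_box (hφbox t htIcc) (fun l => ?_)
          (Function.update_of_ne hji t g)) (hg_Sub'.2 j)
        rcases eq_or_ne l i with rfl | hli
        · simpa [Function.update_self] using ht2.1.le
        · simp [Function.update_of_ne hli]
    have hcontr := hg_ub _ hφtSub i
    rw [Function.update_self] at hcontr
    exact absurd (ht2.1.trans_le hcontr) (lt_irrefl _)
  -- conclusion
  refine ⟨g, ⟨hg_box, funext hHg⟩, ?_⟩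
  rintro y ⟨hybox, hyH⟩
  have hgH : Hmap N Δx Δt V m1 m2 U' 1 g = ρn := funext hHg
  have h1 := SWP.le_of_Hmap_eq hN hΔx0 hΔt hm1_mono hm1_nonneg hm2_anti hm2_nonneg
    hU'_mono hybox hg_box (fun i => by rw [congrFun hyH i, congrFun hgH i])
  have h2 := SWP.le_of_Hmap_eq hN hΔx0 hΔt hm1_mono hm1_nonneg hm2_anti hm2_nonneg
    hU'_mono hg_box hybox (fun i => by rw [congrFun hgH i, congrFun hyH i])
  exact funext fun i => le_antisymm (h1 i) (h2 i)
end

section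
/- Assume U : [0,α] → ℝ is continuous, convex, and continuously differentiable on (0,α) with derivative U′, that m¹ : [0,α] → [0,∞) is continuous, nondecreasing and satisfies m¹(0) = 0, and that m² : [0,α] → [0,∞) is continuous, nonincreasing and satisfies m²(α) = 0. Then for every ρⁿ ∈ 𝒜_{Δ,+} = (0,α)^N there exists exactly one ρ ∈ 𝒜_{Δ,+} such that H(ρ) = ρⁿ. -/
open Set Finset

open Filter Topology

private lemma mul_min_le_mul_min {A A' B B' : ℝ} (hA' : 0 ≤ A') (hA : A' ≤ A)
    (hB : B ≤ B') (hB' : B' ≤ 0) : A * B ≤ A' * B' :=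
  calc A * B ≤ A * B' := mul_le_mul_of_nonneg_left hB (hA'.trans hA)
    _ ≤ A' * B' := mul_le_mul_of_nonpos_right hA hB'

private lemma abs_sub' (a b : ℝ) : |a - b| ≤ |a| + |b| := by
  rw [sub_eq_add_neg]
  calc |a + -b| ≤ |a| + |-b| := abs_add_le _ _
    _ = |a| + |b| := by rw [abs_neg]

/-- The two-point flux function. -/
noncomputable def PhiF (Δx : ℝ) (m1 m2 U' : ℝ → ℝ) (p q x y : ℝ) : ℝ :=
  m1 x * m2 y * max (-(((U' y + q) - (U' x + p)) / Δx)) 0 +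
    m1 y * m2 x * min (-(((U' y + q) - (U' x + p)) / Δx)) 0

lemma PhiF_mono {α Δx : ℝ} {m1 m2 U' : ℝ → ℝ} (hΔx : 0 < Δx)
    (hm1_mono : MonotoneOn m1 (Icc 0 α)) (hm1_nonneg : ∀ s ∈ Icc 0 α, 0 ≤ m1 s)
    (hm2_anti : AntitoneOn m2 (Icc 0 α)) (hm2_nonneg : ∀ s ∈ Icc 0 α, 0 ≤ m2 s)
    (hU'_mono : ∀ x ∈ Ioo 0 α, ∀ y ∈ Ioo 0 α, x ≤ y → U' x ≤ U' y)
    (p q : ℝ) {x y x' y' : ℝ} (hx : x ∈ Ioo 0 α) (hy : y ∈ Ioo 0 α)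
    (hx' : x' ∈ Ioo 0 α) (hy' : y' ∈ Ioo 0 α) (hxx : x ≤ x') (hyy : y' ≤ y) :
    PhiF Δx m1 m2 U' p q x y ≤ PhiF Δx m1 m2 U' p q x' y' := by
  have hIcc : Ioo 0 α ⊆ Icc (0:ℝ) α := Ioo_subset_Icc_self
  have hUx : U' x ≤ U' x' := hU'_mono x hx x' hx' hxx
  have hUy : U' y' ≤ U' y := hU'_mono y' hy' y hy hyy
  set v := -(((U' y + q) - (U' x + p)) / Δx) with hv
  set v' := -(((U' y' + q) - (U' x' + p)) / Δx) with hv'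
  have hvv : v ≤ v' := by
    rw [hv, hv']
    have hnum : (U' y' + q) - (U' x' + p) ≤ (U' y + q) - (U' x + p) := by linarith
    exact neg_le_neg ((div_le_div_iff_of_pos_right hΔx).mpr hnum)
  have h1 : m1 x * m2 y * max v 0 ≤ m1 x' * m2 y' * max v' 0 := by
    have h0 : max v 0 ≤ max v' 0 := max_le_max hvv le_rfl
    have h0' : (0:ℝ) ≤ max v 0 := le_max_right _ _
    have hab : m1 x * m2 y ≤ m1 x' * m2 y' :=
      mul_le_mul (hm1_mono (hIcc hx) (hIcc hx') hxx) (hm2_anti (hIcc hy') (hIcc hy) hyy)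
        (hm2_nonneg y (hIcc hy)) (hm1_nonneg x' (hIcc hx'))
    exact mul_le_mul hab h0 h0'
      (mul_nonneg (hm1_nonneg x' (hIcc hx')) (hm2_nonneg y' (hIcc hy')))
  have h2 : m1 y * m2 x * min v 0 ≤ m1 y' * m2 x' * min v' 0 := by
    have hA' : 0 ≤ m1 y' * m2 x' :=
      mul_nonneg (hm1_nonneg y' (hIcc hy')) (hm2_nonneg x' (hIcc hx'))
    have hA : m1 y' * m2 x' ≤ m1 y * m2 x := by
      have h1 := hm1_mono (hIcc hy') (hIcc hy) hyy
      have h2 := hm2_anti (hIcc hx) (hIcc hx') hxx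
      exact mul_le_mul h1 h2 (hm2_nonneg x' (hIcc hx')) (hm1_nonneg y (hIcc hy))
    exact mul_min_le_mul_min hA' hA (min_le_min hvv le_rfl) (min_le_right _ _)
  exact add_le_add h1 h2

lemma PhiF_contAt {α Δx : ℝ} {m1 m2 U' : ℝ → ℝ} (hα : 0 < α)
    (hm1_cont : ContinuousOn m1 (Icc 0 α)) (hm2_cont : ContinuousOn m2 (Icc 0 α))
    (hU'_cont : ContinuousOn U' (Ioo 0 α))
    (p q : ℝ) {x y : ℝ} (hx : x ∈ Ioo 0 α) (hy : y ∈ Ioo 0 α) :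
    ContinuousAt (fun z : ℝ × ℝ => PhiF Δx m1 m2 U' p q z.1 z.2) (x, y) := by
  have hm1x : ContinuousAt m1 x :=
    (hm1_cont x (Ioo_subset_Icc_self hx)).continuousAt (Icc_mem_nhds hx.1 hx.2)
  have hm1y : ContinuousAt m1 y :=
    (hm1_cont y (Ioo_subset_Icc_self hy)).continuousAt (Icc_mem_nhds hy.1 hy.2)
  have hm2x : ContinuousAt m2 x :=
    (hm2_cont x (Ioo_subset_Icc_self hx)).continuousAt (Icc_mem_nhds hx.1 hx.2)
  have hm2y : ContinuousAt m2 y :=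
    (hm2_cont y (Ioo_subset_Icc_self hy)).continuousAt (Icc_mem_nhds hy.1 hy.2)
  have hUx : ContinuousAt U' x :=
    (hU'_cont x hx).continuousAt ((isOpen_Ioo (a := (0:ℝ)) (b := α)).mem_nhds hx)
  have hUy : ContinuousAt U' y :=
    (hU'_cont y hy).continuousAt ((isOpen_Ioo (a := (0:ℝ)) (b := α)).mem_nhds hy)
  have cfst : ContinuousAt (Prod.fst : ℝ × ℝ → ℝ) (x, y) := continuousAt_fst
  have csnd : ContinuousAt (Prod.snd : ℝ × ℝ → ℝ) (x, y) := continuousAt_snd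
  have h1 : ContinuousAt (fun z : ℝ × ℝ => m1 z.1) (x, y) := hm1x.comp cfst
  have h2 : ContinuousAt (fun z : ℝ × ℝ => m1 z.2) (x, y) := hm1y.comp csnd
  have h3 : ContinuousAt (fun z : ℝ × ℝ => m2 z.1) (x, y) := hm2x.comp cfst
  have h4 : ContinuousAt (fun z : ℝ × ℝ => m2 z.2) (x, y) := hm2y.comp csnd
  have h5 : ContinuousAt (fun z : ℝ × ℝ => U' z.1) (x, y) := hUx.comp cfst
  have h6 : ContinuousAt (fun z : ℝ × ℝ => U' z.2) (x, y) := hUy.comp csnd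
  have hvc : ContinuousAt
      (fun z : ℝ × ℝ => -(((U' z.2 + q) - (U' z.1 + p)) / Δx)) (x, y) :=
    (((h6.add continuousAt_const).sub (h5.add continuousAt_const)).div_const Δx).neg
  exact (((h1.mul h4).mul (hvc.max continuousAt_const)).add
    ((h2.mul h3).mul (hvc.min continuousAt_const)))

lemma sum_interface (n : ℕ) (g χ : ℕ → ℝ) (hg : g n = 0) :
    ∑ k ∈ Finset.range (n + 1), χ k * (g k - (if k = 0 then 0 else g (k - 1))) =
      ∑ k ∈ Finset.range n, (χ k - χ (k + 1)) * g k := by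
  simp only [mul_sub]
  rw [Finset.sum_sub_distrib, Finset.sum_range_succ, hg, mul_zero, add_zero,
    Finset.sum_range_succ']
  simp only [if_pos, mul_zero, add_zero, Nat.add_sub_cancel, if_true, if_false]
  rw [← Finset.sum_sub_distrib]
  exact Finset.sum_congr rfl fun k _ => by rw [if_neg (by omega : ¬(k + 1 = 0))]; ring

lemma numFlux_eq_PhiF {N : ℕ} {Δx : ℝ} {V : Fin N → ℝ} {m1 m2 U' : ℝ → ℝ}
    (ρ : Fin N → ℝ) {k : ℕ} (h : k + 1 < N) :
    numFlux N Δx V m1 m2 U' ρ k =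
      PhiF Δx m1 m2 U' (V ⟨k, Nat.lt_of_succ_lt h⟩) (V ⟨k + 1, h⟩)
        (ρ ⟨k, Nat.lt_of_succ_lt h⟩) (ρ ⟨k + 1, h⟩) := by
  simp [numFlux, vel, PhiF, h]

lemma numFlux_eq_zero {N : ℕ} {Δx : ℝ} {V : Fin N → ℝ} {m1 m2 U' : ℝ → ℝ}
    (ρ : Fin N → ℝ) {k : ℕ} (h : ¬ (k + 1 < N)) :
    numFlux N Δx V m1 m2 U' ρ k = 0 := by
  simp [numFlux, h]

lemma Hmap_update_eq (N : ℕ) (Δx Δt : ℝ) (V : Fin N → ℝ) (m1 m2 U' : ℝ → ℝ)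
    (ρ : Fin N → ℝ) (i : Fin N) (t : ℝ) :
    Hmap N Δx Δt V m1 m2 U' 1 (Function.update ρ i t) i =
      t + Δt / Δx *
        ((if h : (i : ℕ) + 1 < N then
            PhiF Δx m1 m2 U' (V i) (V ⟨(i : ℕ) + 1, h⟩) t (ρ ⟨(i : ℕ) + 1, h⟩) else 0) -
         (if h : (i : ℕ) ≠ 0 then
            PhiF Δx m1 m2 U'
              (V ⟨(i : ℕ) - 1, Nat.lt_of_le_of_lt (Nat.sub_le _ _) i.isLt⟩) (V i)
              (ρ ⟨(i : ℕ) - 1, Nat.lt_of_le_of_lt (Nat.sub_le _ _) i.isLt⟩) t else 0)) := by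
  have hiN := i.isLt
  have hR : numFlux N Δx V m1 m2 U' (Function.update ρ i t) (i : ℕ) =
      (if h : (i : ℕ) + 1 < N then
        PhiF Δx m1 m2 U' (V i) (V ⟨(i : ℕ) + 1, h⟩) t (ρ ⟨(i : ℕ) + 1, h⟩) else 0) := by
    by_cases h : (i : ℕ) + 1 < N
    · rw [numFlux_eq_PhiF _ h, dif_pos h]
      have e0 : (⟨(i : ℕ), Nat.lt_of_succ_lt h⟩ : Fin N) = i := by
        apply Fin.ext; rfl
      have e1 : (⟨(i : ℕ) + 1, h⟩ : Fin N) ≠ i := by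
        simp [Fin.ext_iff]
      rw [e0, Function.update_self, Function.update_of_ne e1]
    · rw [numFlux_eq_zero _ h, dif_neg h]
  have hL : (if (i : ℕ) = 0 then 0
        else numFlux N Δx V m1 m2 U' (Function.update ρ i t) ((i : ℕ) - 1)) =
      (if h : (i : ℕ) ≠ 0 then
        PhiF Δx m1 m2 U'
          (V ⟨(i : ℕ) - 1, Nat.lt_of_le_of_lt (Nat.sub_le _ _) i.isLt⟩) (V i)
          (ρ ⟨(i : ℕ) - 1, Nat.lt_of_le_of_lt (Nat.sub_le _ _) i.isLt⟩) t else 0) := by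
    by_cases h0 : (i : ℕ) = 0
    · rw [if_pos h0, dif_neg (by simpa using h0)]
    · rw [if_neg h0, dif_pos h0]
      have hk : ((i : ℕ) - 1) + 1 < N := by omega
      rw [numFlux_eq_PhiF _ hk]
      have e2 : (⟨(i : ℕ) - 1, Nat.lt_of_succ_lt hk⟩ : Fin N) ≠ i := by
        simp only [ne_eq, Fin.ext_iff]; omega
      have e3 : (⟨((i : ℕ) - 1) + 1, hk⟩ : Fin N) = i := by
        apply Fin.ext; simp; omega
      rw [e3, Function.update_self, Function.update_of_ne e2]
  show Function.update ρ i t i + 1 * (Δt / Δx) * _ = _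
  rw [Function.update_self, one_mul, hR, hL]

set_option maxHeartbeats 2000000 in
/-- Well-posedness of one step of the implicit finite-volume scheme on
𝒜_{Δ,+} = (0,α)^N for U continuous on [0,α] and C¹ on (0,α). -/
theorem scheme_well_posedness_open
    (N : ℕ) (hN : 2 ≤ N) (Δx Δt : ℝ) (hΔx : Δx = 1 / N) (hΔt : 0 < Δt)
    (α : ℝ) (hα : 0 < α) (V : Fin N → ℝ)
    (U U' : ℝ → ℝ) (hU_cont : ContinuousOn U (Icc 0 α))
    (hU_conv : ConvexOn ℝ (Icc 0 α) U)
    (hU_deriv : ∀ s ∈ Ioo 0 α, HasDerivAt U (U' s) s)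
    (hU'_cont : ContinuousOn U' (Ioo 0 α))
    (m1 m2 : ℝ → ℝ)
    (hm1_cont : ContinuousOn m1 (Icc 0 α)) (hm1_mono : MonotoneOn m1 (Icc 0 α))
    (hm1_nonneg : ∀ s ∈ Icc 0 α, 0 ≤ m1 s) (hm10 : m1 0 = 0)
    (hm2_cont : ContinuousOn m2 (Icc 0 α)) (hm2_anti : AntitoneOn m2 (Icc 0 α))
    (hm2_nonneg : ∀ s ∈ Icc 0 α, 0 ≤ m2 s) (hm2α : m2 α = 0)
    (ρn : Fin N → ℝ) (hρn : ∀ i, ρn i ∈ Ioo 0 α) :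
    ∃! ρ : Fin N → ℝ, (∀ i, ρ i ∈ Ioo 0 α) ∧ Hmap N Δx Δt V m1 m2 U' 1 ρ = ρn := by
  classical
  have hNpos : 0 < N := by omega
  have hΔxpos : 0 < Δx := by
    have hN0 : (0:ℝ) < (N:ℝ) := by exact_mod_cast hNpos
    rw [hΔx]; positivity
  have hc : 0 < Δt / Δx := div_pos hΔt hΔxpos
  have hIccsub : Ioo (0:ℝ) α ⊆ Icc 0 α := Ioo_subset_Icc_self
  -- U' is monotone on (0, α)
  have hU'_mono : ∀ x ∈ Ioo (0:ℝ) α, ∀ y ∈ Ioo (0:ℝ) α, x ≤ y → U' x ≤ U' y := by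
    intro x hx y hy hxy
    rcases eq_or_lt_of_le hxy with rfl | hlt
    · exact le_rfl
    · exact (hU_conv.le_slope_of_hasDerivAt (hIccsub hx) (hIccsub hy) hlt
        (hU_deriv x hx)).trans
        (hU_conv.slope_le_of_hasDerivAt (hIccsub hx) (hIccsub hy) hlt (hU_deriv y hy))
  -- comparison lemma
  have hcomp : ∀ u w : Fin N → ℝ, (∀ j, u j ∈ Ioo 0 α) → (∀ j, w j ∈ Ioo 0 α) →
      ∀ i : Fin N, u i ≤ w i → (∀ j, j ≠ i → w j ≤ u j) →
      w i - u i ≤ Hmap N Δx Δt V m1 m2 U' 1 w i - Hmap N Δx Δt V m1 m2 U' 1 u i := by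
    intro u w hu hw i hui hwj
    have hR : numFlux N Δx V m1 m2 U' u (i:ℕ) ≤ numFlux N Δx V m1 m2 U' w (i:ℕ) := by
      by_cases h : (i:ℕ) + 1 < N
      · rw [numFlux_eq_PhiF u h, numFlux_eq_PhiF w h]
        have e0 : (⟨(i:ℕ), Nat.lt_of_succ_lt h⟩ : Fin N) = i := Fin.ext rfl
        have hne : (⟨(i:ℕ)+1, h⟩ : Fin N) ≠ i := by simp [Fin.ext_iff]
        rw [e0]
        exact PhiF_mono hΔxpos hm1_mono hm1_nonneg hm2_anti hm2_nonneg hU'_mono _ _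
          (hu i) (hu _) (hw i) (hw _) hui (hwj _ hne)
      · rw [numFlux_eq_zero u h, numFlux_eq_zero w h]
    have hL : (if (i:ℕ) = 0 then 0 else numFlux N Δx V m1 m2 U' w ((i:ℕ)-1)) ≤
        (if (i:ℕ) = 0 then 0 else numFlux N Δx V m1 m2 U' u ((i:ℕ)-1)) := by
      by_cases h0 : (i:ℕ) = 0
      · simp [h0]
      · rw [if_neg h0, if_neg h0]
        have hk : ((i:ℕ)-1) + 1 < N := by have := i.isLt; omega
        rw [numFlux_eq_PhiF u hk, numFlux_eq_PhiF w hk]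
        have e3 : (⟨((i:ℕ)-1)+1, hk⟩ : Fin N) = i := by
          apply Fin.ext; simp; omega
        have hne : (⟨(i:ℕ)-1, Nat.lt_of_succ_lt hk⟩ : Fin N) ≠ i := by
          simp only [ne_eq, Fin.ext_iff]; omega
        rw [e3]
        exact PhiF_mono hΔxpos hm1_mono hm1_nonneg hm2_anti hm2_nonneg hU'_mono _ _
          (hw _) (hw i) (hu _) (hu i) (hwj _ hne) hui
    have key : numFlux N Δx V m1 m2 U' u (i:ℕ) -
        (if (i:ℕ) = 0 then 0 else numFlux N Δx V m1 m2 U' u ((i:ℕ)-1)) ≤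
        numFlux N Δx V m1 m2 U' w (i:ℕ) -
        (if (i:ℕ) = 0 then 0 else numFlux N Δx V m1 m2 U' w ((i:ℕ)-1)) :=
      sub_le_sub hR hL
    have key2 := mul_le_mul_of_nonneg_left key hc.le
    simp only [Hmap, one_mul]
    linarith
  -- basic constants
  have hne : (Finset.univ : Finset (Fin N)).Nonempty := ⟨⟨0, hNpos⟩, Finset.mem_univ _⟩
  set Vb := Finset.univ.sup' hne (fun j => |V j|) with hVbdef
  have hVb_le : ∀ j, |V j| ≤ Vb := fun j => by
    rw [hVbdef]; exact Finset.le_sup' (fun j => |V j|) (Finset.mem_univ j)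
  have hVb0 : (0:ℝ) ≤ Vb := (abs_nonneg _).trans (hVb_le ⟨0, hNpos⟩)
  set ρmin := Finset.univ.inf' hne ρn with hρmindef
  have hρmin_pos : 0 < ρmin := by
    rw [hρmindef]; exact (Finset.lt_inf'_iff hne).mpr (fun i _ => (hρn i).1)
  have hρmin_le : ∀ i, ρmin ≤ ρn i := fun i => by
    rw [hρmindef]; exact Finset.inf'_le ρn (Finset.mem_univ i)
  set ρmax := Finset.univ.sup' hne ρn with hρmaxdef
  have hρmax_lt : ρmax < α := by
    rw [hρmaxdef]; exact (Finset.sup'_lt_iff hne).mpr (fun i _ => (hρn i).2)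
  have hρmax_ge : ∀ i, ρn i ≤ ρmax := fun i => by
    rw [hρmaxdef]; exact Finset.le_sup' ρn (Finset.mem_univ i)
  -- diagonal value of PhiF
  have hPhidiag : ∀ p q x : ℝ, PhiF Δx m1 m2 U' p q x x = m1 x * m2 x * ((p - q) / Δx) := by
    intro p q x
    show m1 x * m2 x * max (-(((U' x + q) - (U' x + p)) / Δx)) 0 +
        m1 x * m2 x * min (-(((U' x + q) - (U' x + p)) / Δx)) 0 = _
    rw [← mul_add, max_add_min, add_zero]
    congr 1
    ring
  have hQ0 : (0:ℝ) ≤ 2 * Vb / Δx := div_nonneg (by linarith) hΔxpos.le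
  -- flux bound at constant states
  have hfluxbound : ∀ x : ℝ, x ∈ Icc (0:ℝ) α → ∀ k : ℕ,
      |numFlux N Δx V m1 m2 U' (fun _ => x) k| ≤ m1 x * m2 x * (2 * Vb / Δx) := by
    intro x hx k
    have hm1x := hm1_nonneg x hx
    have hm2x := hm2_nonneg x hx
    by_cases h : k + 1 < N
    · rw [numFlux_eq_PhiF _ h]
      show |PhiF Δx m1 m2 U' (V ⟨k, Nat.lt_of_succ_lt h⟩) (V ⟨k+1, h⟩) x x| ≤ _
      rw [hPhidiag, abs_mul, abs_mul, abs_of_nonneg hm1x, abs_of_nonneg hm2x]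
      have hv : |(V ⟨k, Nat.lt_of_succ_lt h⟩ - V ⟨k+1, h⟩) / Δx| ≤ 2 * Vb / Δx := by
        rw [abs_div, abs_of_pos hΔxpos]
        refine (div_le_div_iff_of_pos_right hΔxpos).mpr ?_
        calc |V ⟨k, Nat.lt_of_succ_lt h⟩ - V ⟨k+1, h⟩|
            ≤ |V ⟨k, Nat.lt_of_succ_lt h⟩| + |V ⟨k+1,h⟩| := abs_sub' _ _
          _ ≤ Vb + Vb := add_le_add (hVb_le _) (hVb_le _)
          _ = 2 * Vb := by ring
      exact mul_le_mul_of_nonneg_left hv (mul_nonneg hm1x hm2x)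
    · rw [numFlux_eq_zero _ h, abs_zero]
      exact mul_nonneg (mul_nonneg hm1x hm2x) hQ0
  set Q := 4 * Vb / Δx with hQdef
  have hQnn : (0:ℝ) ≤ Q := by rw [hQdef]; exact div_nonneg (by linarith) hΔxpos.le
  -- Hmap at constant states
  have hconstH : ∀ x : ℝ, x ∈ Icc (0:ℝ) α → ∀ i : Fin N,
      |Hmap N Δx Δt V m1 m2 U' 1 (fun _ => x) i - x| ≤ Δt / Δx * (m1 x * m2 x * Q) := by
    intro x hx i
    have hsplit : Hmap N Δx Δt V m1 m2 U' 1 (fun _ => x) i - x =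
        Δt / Δx * (numFlux N Δx V m1 m2 U' (fun _ => x) (i:ℕ) -
          (if (i:ℕ) = 0 then 0 else numFlux N Δx V m1 m2 U' (fun _ => x) ((i:ℕ)-1))) := by
      simp only [Hmap, one_mul]; ring
    rw [hsplit, abs_mul, abs_of_pos hc]
    have h1 := hfluxbound x hx (i:ℕ)
    have h2 : |if (i:ℕ) = 0 then 0 else numFlux N Δx V m1 m2 U' (fun _ => x) ((i:ℕ)-1)| ≤
        m1 x * m2 x * (2 * Vb / Δx) := by
      by_cases h0 : (i:ℕ) = 0
      · rw [if_pos h0, abs_zero]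
        exact mul_nonneg (mul_nonneg (hm1_nonneg x hx) (hm2_nonneg x hx)) hQ0
      · rw [if_neg h0]; exact hfluxbound x hx _
    have h3 := abs_sub' (numFlux N Δx V m1 m2 U' (fun _ => x) (i:ℕ))
      (if (i:ℕ) = 0 then 0 else numFlux N Δx V m1 m2 U' (fun _ => x) ((i:ℕ)-1))
    have h4 : m1 x * m2 x * (2 * Vb / Δx) + m1 x * m2 x * (2 * Vb / Δx) =
        m1 x * m2 x * Q := by rw [hQdef]; ring
    have h5 : |numFlux N Δx V m1 m2 U' (fun _ => x) (i:ℕ) -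
        (if (i:ℕ) = 0 then 0 else numFlux N Δx V m1 m2 U' (fun _ => x) ((i:ℕ)-1))| ≤
        m1 x * m2 x * Q := by linarith
    exact mul_le_mul_of_nonneg_left h5 hc.le
  have hm2_0 : 0 ≤ m2 0 := hm2_nonneg 0 ⟨le_rfl, hα.le⟩
  have hm1_α : 0 ≤ m1 α := hm1_nonneg α ⟨hα.le, le_rfl⟩
  set K := Δt / Δx * (m2 0 * Q) with hKdef
  set K2 := Δt / Δx * (m1 α * Q) with hK2def
  have hHup : ∀ x : ℝ, x ∈ Icc (0:ℝ) α → ∀ i : Fin N,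
      Hmap N Δx Δt V m1 m2 U' 1 (fun _ => x) i ≤ x + m1 x * K := by
    intro x hx i
    have h1 := (abs_le.mp (hconstH x hx i)).2
    have hm2le : m2 x ≤ m2 0 := hm2_anti ⟨le_rfl, hα.le⟩ hx hx.1
    have h2 : Δt / Δx * (m1 x * m2 x * Q) ≤ m1 x * K := by
      rw [hKdef]
      nlinarith [mul_nonneg (mul_nonneg (mul_nonneg hc.le (hm1_nonneg x hx)) hQnn)
        (sub_nonneg.mpr hm2le)]
    linarith
  have hHdown : ∀ x : ℝ, x ∈ Icc (0:ℝ) α → ∀ i : Fin N,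
      x - m2 x * K2 ≤ Hmap N Δx Δt V m1 m2 U' 1 (fun _ => x) i := by
    intro x hx i
    have h1 := (abs_le.mp (hconstH x hx i)).1
    have hm1le : m1 x ≤ m1 α := hm1_mono hx ⟨hα.le, le_rfl⟩ hx.2
    have h2 : Δt / Δx * (m1 x * m2 x * Q) ≤ m2 x * K2 := by
      rw [hK2def]
      nlinarith [mul_nonneg (mul_nonneg (mul_nonneg hc.le (hm2_nonneg x hx)) hQnn)
        (sub_nonneg.mpr hm1le)]
    linarith
  -- choice of δ
  have hm1t : Tendsto m1 (𝓝[>] (0:ℝ)) (𝓝 0) := by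
    have h := hm1_cont 0 ⟨le_rfl, hα.le⟩
    have hIccmem : Icc (0:ℝ) α ∈ 𝓝[>] (0:ℝ) :=
      mem_nhdsWithin.mpr ⟨Iio α, isOpen_Iio, hα, fun z hz => ⟨(hz.2 : (0:ℝ) < z).le, (hz.1 : z < α).le⟩⟩
    have h' := h.mono_left (nhdsWithin_le_of_mem hIccmem)
    rwa [hm10] at h'
  have htendδ : Tendsto (fun x : ℝ => x + m1 x * K) (𝓝[>] (0:ℝ)) (𝓝 0) := by
    have hid : Tendsto (fun x : ℝ => x) (𝓝[>] (0:ℝ)) (𝓝 0) :=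
      tendsto_id.mono_right nhdsWithin_le_nhds
    have := hid.add (hm1t.mul_const K)
    simpa using this
  have hev1 : ∀ᶠ x in 𝓝[>] (0:ℝ), x + m1 x * K < ρmin :=
    htendδ.eventually (eventually_lt_nhds hρmin_pos)
  have hev2 : ∀ᶠ x in 𝓝[>] (0:ℝ), x ∈ Ioo (0:ℝ) α :=
    mem_nhdsWithin.mpr ⟨Iio α, isOpen_Iio, hα, fun z hz => ⟨hz.2, hz.1⟩⟩
  obtain ⟨δ, hδsum, hδIoo⟩ := (hev1.and hev2).exists
  have hδ0 : 0 < δ := hδIoo.1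
  have hδα : δ < α := hδIoo.2
  -- choice of β
  have hm2t : Tendsto m2 (𝓝[<] α) (𝓝 0) := by
    have h := hm2_cont α ⟨hα.le, le_rfl⟩
    have hIccmem : Icc (0:ℝ) α ∈ 𝓝[<] α :=
      mem_nhdsWithin.mpr ⟨Ioi 0, isOpen_Ioi, hα, fun z hz => ⟨(hz.1 : (0:ℝ) < z).le, (hz.2 : z < α).le⟩⟩
    have h' := h.mono_left (nhdsWithin_le_of_mem hIccmem)
    rwa [hm2α] at h'
  have htendβ : Tendsto (fun x : ℝ => x - m2 x * K2) (𝓝[<] α) (𝓝 α) := by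
    have hid : Tendsto (fun x : ℝ => x) (𝓝[<] α) (𝓝 α) :=
      tendsto_id.mono_right nhdsWithin_le_nhds
    have := hid.sub (hm2t.mul_const K2)
    simpa using this
  have hev3 : ∀ᶠ x in 𝓝[<] α, ρmax < x - m2 x * K2 :=
    htendβ.eventually (eventually_gt_nhds hρmax_lt)
  have hev4 : ∀ᶠ x in 𝓝[<] α, x ∈ Ioo δ α :=
    mem_nhdsWithin.mpr ⟨Ioi δ, isOpen_Ioi, hδα, fun z hz => ⟨hz.1, hz.2⟩⟩
  obtain ⟨β, hβsum, hβIoo⟩ := (hev3.and hev4).exists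
  have hδβ : δ < β := hβIoo.1
  have hβα : β < α := hβIoo.2
  have hβ0 : 0 < β := hδ0.trans hδβ
  have hboxIoo : Icc δ β ⊆ Ioo (0:ℝ) α :=
    fun z hz => ⟨hδ0.trans_le hz.1, hz.2.trans_lt hβα⟩
  have hδbox : δ ∈ Icc δ β := ⟨le_rfl, hδβ.le⟩
  have hβbox : β ∈ Icc δ β := ⟨hδβ.le, le_rfl⟩
  -- sub/supersolutions
  have hsubsol : ∀ i, Hmap N Δx Δt V m1 m2 U' 1 (fun _ => δ) i < ρn i := fun i =>
    lt_of_le_of_lt (hHup δ ⟨hδ0.le, hδα.le⟩ i) (lt_of_lt_of_le hδsum (hρmin_le i))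
  have hsupsol : ∀ i, ρn i < Hmap N Δx Δt V m1 m2 U' 1 (fun _ => β) i := fun i =>
    lt_of_le_of_lt (hρmax_ge i) (lt_of_lt_of_le hβsum (hHdown β ⟨hβ0.le, hβα.le⟩ i))
  -- entries of updates
  have hupdIoo : ∀ (ρ : Fin N → ℝ), (∀ j, ρ j ∈ Icc δ β) → ∀ (i : Fin N) (s : ℝ),
      s ∈ Icc δ β → ∀ j, Function.update ρ i s j ∈ Ioo (0:ℝ) α := by
    intro ρ hρ i s hs j
    rcases eq_or_ne j i with rfl | hne
    · rw [Function.update_self]; exact hboxIoo hs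
    · rw [Function.update_of_ne hne]; exact hboxIoo (hρ j)
  -- continuity of the scalar map
  have hφcont : ∀ (ρ : Fin N → ℝ), (∀ j, ρ j ∈ Icc δ β) → ∀ i : Fin N,
      ContinuousOn (fun t => Hmap N Δx Δt V m1 m2 U' 1 (Function.update ρ i t) i)
        (Icc δ β) := by
    intro ρ hρ i
    simp only [Hmap_update_eq]
    apply continuousOn_of_forall_continuousAt
    intro t ht
    have htIoo : t ∈ Ioo (0:ℝ) α := hboxIoo ht
    have hA : ContinuousAt (fun t : ℝ =>
        (if h : (i : ℕ) + 1 < N then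
          PhiF Δx m1 m2 U' (V i) (V ⟨(i : ℕ) + 1, h⟩) t (ρ ⟨(i : ℕ) + 1, h⟩) else 0)) t := by
      by_cases hR : (i:ℕ) + 1 < N
      · simp only [dif_pos hR]
        have hp : ContinuousAt (fun s : ℝ =>
            ((s, ρ ⟨(i : ℕ) + 1, hR⟩) : ℝ × ℝ)) t := continuousAt_id.prodMk continuousAt_const
        exact Tendsto.comp (PhiF_contAt hα hm1_cont hm2_cont hU'_cont _ _ htIoo
          (hboxIoo (hρ _))).tendsto hp
      · simp only [dif_neg hR]; exact continuousAt_const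
    have hB : ContinuousAt (fun t : ℝ =>
        (if h : (i : ℕ) ≠ 0 then
          PhiF Δx m1 m2 U'
            (V ⟨(i : ℕ) - 1, Nat.lt_of_le_of_lt (Nat.sub_le _ _) i.isLt⟩) (V i)
            (ρ ⟨(i : ℕ) - 1, Nat.lt_of_le_of_lt (Nat.sub_le _ _) i.isLt⟩) t else 0)) t := by
      by_cases hL : (i:ℕ) ≠ 0
      · simp only [dif_pos hL]
        have hp : ContinuousAt (fun s : ℝ =>
            ((ρ ⟨(i : ℕ) - 1, Nat.lt_of_le_of_lt (Nat.sub_le _ _) i.isLt⟩, s) : ℝ × ℝ)) t :=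
          continuousAt_const.prodMk continuousAt_id
        exact Tendsto.comp (PhiF_contAt hα hm1_cont hm2_cont hU'_cont _ _
          (hboxIoo (hρ _)) htIoo).tendsto hp
      · simp only [dif_neg hL]; exact continuousAt_const
    exact continuousAt_id.add ((hA.sub hB).const_mul _)
  -- existence of the scalar root
  have hroot : ∀ (ρ : Fin N → ℝ), (∀ j, ρ j ∈ Icc δ β) → ∀ i : Fin N,
      ∃ t, t ∈ Icc δ β ∧
        Hmap N Δx Δt V m1 m2 U' 1 (Function.update ρ i t) i = ρn i := by
    intro ρ hρ i
    have hlow : Hmap N Δx Δt V m1 m2 U' 1 (Function.update ρ i δ) i ≤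
        Hmap N Δx Δt V m1 m2 U' 1 (fun _ => δ) i := by
      have h := hcomp (Function.update ρ i δ) (fun _ => δ)
        (hupdIoo ρ hρ i δ hδbox) (fun _ => hboxIoo hδbox) i
        (by rw [Function.update_self])
        (fun j hj => by rw [Function.update_of_ne hj]; exact (hρ j).1)
      rw [Function.update_self] at h
      linarith
    have hhigh : Hmap N Δx Δt V m1 m2 U' 1 (fun _ => β) i ≤
        Hmap N Δx Δt V m1 m2 U' 1 (Function.update ρ i β) i := by
      have h := hcomp (fun _ => β) (Function.update ρ i β)
        (fun _ => hboxIoo hβbox) (hupdIoo ρ hρ i β hβbox) i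
        (by rw [Function.update_self])
        (fun j hj => by rw [Function.update_of_ne hj]; exact (hρ j).2)
      rw [Function.update_self] at h
      linarith
    have hivt := intermediate_value_Icc hδβ.le (hφcont ρ hρ i)
    have hmem : ρn i ∈ Icc (Hmap N Δx Δt V m1 m2 U' 1 (Function.update ρ i δ) i)
        (Hmap N Δx Δt V m1 m2 U' 1 (Function.update ρ i β) i) :=
      ⟨(hlow.trans (hsubsol i).le), ((hsupsol i).le.trans hhigh)⟩
    obtain ⟨t, htmem, hteq⟩ := hivt hmem
    exact ⟨t, htmem, hteq⟩
  -- the iteration map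
  obtain ⟨T, hT⟩ : ∃ T : (Fin N → ℝ) → (Fin N → ℝ), ∀ ρ, (∀ j, ρ j ∈ Icc δ β) →
      ∀ i, T ρ i ∈ Icc δ β ∧
        Hmap N Δx Δt V m1 m2 U' 1 (Function.update ρ i (T ρ i)) i = ρn i := by
    refine ⟨fun ρ i => if h : ∀ j, ρ j ∈ Icc δ β then (hroot ρ h i).choose else δ, ?_⟩
    intro ρ h i
    simp only [dif_pos h]
    exact ⟨(hroot ρ h i).choose_spec.1, (hroot ρ h i).choose_spec.2⟩
  -- monotonicity of T
  have hTmono : ∀ ρ σ : Fin N → ℝ, (∀ j, ρ j ∈ Icc δ β) → (∀ j, σ j ∈ Icc δ β) →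
      (∀ j, ρ j ≤ σ j) → ∀ i, T ρ i ≤ T σ i := by
    intro ρ σ hρ hσ hle i
    by_contra hcon
    push_neg at hcon
    have h := hcomp (Function.update σ i (T σ i)) (Function.update ρ i (T ρ i))
      (hupdIoo σ hσ i _ (hT σ hσ i).1) (hupdIoo ρ hρ i _ (hT ρ hρ i).1) i
      (by rw [Function.update_self, Function.update_self]; exact hcon.le)
      (fun j hj => by
        rw [Function.update_of_ne hj, Function.update_of_ne hj]; exact hle j)
    rw [Function.update_self, Function.update_self, (hT ρ hρ i).2, (hT σ hσ i).2] at h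
    linarith
  -- the iteration
  obtain ⟨seq, hseq0, hseqS⟩ : ∃ seq : ℕ → Fin N → ℝ,
      seq 0 = (fun _ => δ) ∧ ∀ n, seq (n+1) = T (seq n) :=
    ⟨fun n => T^[n] (fun _ => δ), rfl, fun n => Function.iterate_succ_apply' T n _⟩
  have hseq_box : ∀ n, ∀ j, seq n j ∈ Icc δ β := by
    intro n
    induction n with
    | zero => intro j; rw [hseq0]; exact hδbox
    | succ n ih => intro j; rw [hseqS]; exact (hT (seq n) ih j).1
  have hseq_eq : ∀ n i, Hmap N Δx Δt V m1 m2 U' 1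
      (Function.update (seq n) i (seq (n+1) i)) i = ρn i := by
    intro n i
    rw [hseqS]
    exact (hT (seq n) (hseq_box n) i).2
  have hseq_mono : ∀ n j, seq n j ≤ seq (n+1) j := by
    intro n
    induction n with
    | zero =>
      intro j
      rw [hseq0, hseqS, hseq0]
      exact ((hT (fun _ => δ) (fun _ => hδbox) j).1).1
    | succ n ih =>
      intro j
      rw [hseqS (n+1)]
      rw [hseqS n]
      exact hTmono (seq n) (T (seq n)) (hseq_box n)
        (by rw [← hseqS]; exact hseq_box (n+1)) (fun j' => by rw [← hseqS]; exact ih j') j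
  have hmonoj : ∀ j, Monotone (fun n => seq n j) :=
    fun j => monotone_nat_of_le_succ (fun n => hseq_mono n j)
  set ρs : Fin N → ℝ := fun i => ⨆ n, seq n i with hρsdef
  have hbdd : ∀ i, BddAbove (Set.range fun n => seq n i) := by
    intro i
    refine ⟨β, ?_⟩
    rintro _ ⟨n, rfl⟩
    exact (hseq_box n i).2
  have htends : ∀ i, Tendsto (fun n => seq n i) atTop (𝓝 (ρs i)) :=
    fun i => tendsto_atTop_ciSup (hmonoj i) (hbdd i)
  have hρs_box : ∀ i, ρs i ∈ Icc δ β := by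
    intro i
    constructor
    · have h0 : δ = seq 0 i := by rw [hseq0]
      rw [h0]
      exact le_ciSup (hbdd i) 0
    · exact ciSup_le (fun n => (hseq_box n i).2)
  -- passage to the limit
  have hkey : ∀ i, Hmap N Δx Δt V m1 m2 U' 1 ρs i = ρn i := by
    intro i
    have hsucc : Tendsto (fun n => seq (n+1) i) atTop (𝓝 (ρs i)) :=
      (htends i).comp (tendsto_add_atTop_nat 1)
    have hHt : Tendsto (fun n => Hmap N Δx Δt V m1 m2 U' 1
        (Function.update (seq n) i (seq (n+1) i)) i) atTop
        (𝓝 (Hmap N Δx Δt V m1 m2 U' 1 ρs i)) := by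
      have h0 : Hmap N Δx Δt V m1 m2 U' 1 ρs i =
          Hmap N Δx Δt V m1 m2 U' 1 (Function.update ρs i (ρs i)) i := by
        rw [Function.update_eq_self]
      rw [h0]
      simp only [Hmap_update_eq]
      apply Tendsto.add hsucc
      apply Tendsto.const_mul
      apply Tendsto.sub
      · by_cases hR : (i:ℕ) + 1 < N
        · simp only [dif_pos hR]
          exact ((PhiF_contAt hα hm1_cont hm2_cont hU'_cont _ _
            (hboxIoo (hρs_box i)) (hboxIoo (hρs_box _))).tendsto).comp
            (hsucc.prodMk_nhds (htends _))
        · simp only [dif_neg hR]; exact tendsto_const_nhds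
      · by_cases hL : (i:ℕ) ≠ 0
        · simp only [dif_pos hL]
          exact ((PhiF_contAt hα hm1_cont hm2_cont hU'_cont _ _
            (hboxIoo (hρs_box _)) (hboxIoo (hρs_box i))).tendsto).comp
            ((htends _).prodMk_nhds hsucc)
        · simp only [dif_neg hL]; exact tendsto_const_nhds
    have hconst' : Tendsto (fun n => Hmap N Δx Δt V m1 m2 U' 1
        (Function.update (seq n) i (seq (n+1) i)) i) atTop (𝓝 (ρn i)) := by
      simp only [hseq_eq]
      exact tendsto_const_nhds
    exact tendsto_nhds_unique hHt hconst'
  -- uniqueness: comparison of any two solutions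
  have hle : ∀ ρ σ : Fin N → ℝ, (∀ j, ρ j ∈ Ioo 0 α) → (∀ j, σ j ∈ Ioo 0 α) →
      Hmap N Δx Δt V m1 m2 U' 1 ρ = ρn → Hmap N Δx Δt V m1 m2 U' 1 σ = ρn →
      ∀ i, ρ i ≤ σ i := by
    intro ρ σ hρ hσ hHρ hHσ
    by_contra hcon
    push_neg at hcon
    obtain ⟨i0, hi0⟩ := hcon
    set S : Finset (Fin N) := Finset.univ.filter (fun j => σ j < ρ j) with hSdef
    have hi0S : i0 ∈ S := by
      rw [hSdef, Finset.mem_filter]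
      exact ⟨Finset.mem_univ _, hi0⟩
    obtain ⟨g, hg⟩ : ∃ g : ℕ → ℝ, ∀ k, g k =
        numFlux N Δx V m1 m2 U' ρ k - numFlux N Δx V m1 m2 U' σ k := ⟨_, fun _ => rfl⟩
    obtain ⟨χ, hχ⟩ : ∃ χ : ℕ → ℝ, ∀ k, χ k =
        if h : k < N then (if σ ⟨k, h⟩ < ρ ⟨k, h⟩ then (1:ℝ) else 0) else 0 :=
      ⟨_, fun _ => rfl⟩
    have hsum0 : ∑ i ∈ S, (Hmap N Δx Δt V m1 m2 U' 1 ρ i -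
        Hmap N Δx Δt V m1 m2 U' 1 σ i) = 0 := by
      apply Finset.sum_eq_zero
      intro i _
      rw [congrFun hHρ i, congrFun hHσ i, sub_self]
    have hexpand : ∀ i : Fin N, Hmap N Δx Δt V m1 m2 U' 1 ρ i -
        Hmap N Δx Δt V m1 m2 U' 1 σ i =
        (ρ i - σ i) + Δt / Δx * (g (i:ℕ) - (if (i:ℕ) = 0 then 0 else g ((i:ℕ)-1))) := by
      intro i
      simp only [Hmap, one_mul, hg]
      by_cases h0 : (i:ℕ) = 0
      · simp only [if_pos h0]; ring
      · simp only [if_neg h0]; ring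
    have hglast : g (N-1) = 0 := by
      rw [hg, numFlux_eq_zero ρ (by omega), numFlux_eq_zero σ (by omega), sub_self]
    have hsum1 : ∑ i ∈ S, (g (i:ℕ) - (if (i:ℕ) = 0 then 0 else g ((i:ℕ)-1))) =
        ∑ k ∈ Finset.range (N-1), (χ k - χ (k+1)) * g k := by
      have e1 : ∑ i ∈ S, (g (i:ℕ) - (if (i:ℕ) = 0 then 0 else g ((i:ℕ)-1))) =
          ∑ i : Fin N, χ (i:ℕ) * (g (i:ℕ) - (if (i:ℕ) = 0 then 0 else g ((i:ℕ)-1))) := by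
        rw [hSdef, Finset.sum_filter]
        apply Finset.sum_congr rfl
        intro i _
        rw [hχ, dif_pos i.isLt]
        by_cases h : σ i < ρ i
        · rw [if_pos h, if_pos h, one_mul]
        · rw [if_neg h, if_neg h, zero_mul]
      rw [e1,
        Fin.sum_univ_eq_sum_range (fun k => χ k * (g k - (if k = 0 then 0 else g (k-1)))) N]
      have h2 := sum_interface (N-1) g χ hglast
      rw [show N - 1 + 1 = N from by omega] at h2
      exact h2
    have hterm : ∀ k ∈ Finset.range (N-1), 0 ≤ (χ k - χ (k+1)) * g k := by
      intro k hk
      rw [Finset.mem_range] at hk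
      have hkN : k + 1 < N := by omega
      have hk0 : k < N := by omega
      have hgval : g k = PhiF Δx m1 m2 U' (V ⟨k, Nat.lt_of_succ_lt hkN⟩) (V ⟨k+1, hkN⟩)
          (ρ ⟨k, Nat.lt_of_succ_lt hkN⟩) (ρ ⟨k+1, hkN⟩) -
          PhiF Δx m1 m2 U' (V ⟨k, Nat.lt_of_succ_lt hkN⟩) (V ⟨k+1, hkN⟩)
          (σ ⟨k, Nat.lt_of_succ_lt hkN⟩) (σ ⟨k+1, hkN⟩) := by
        rw [hg, numFlux_eq_PhiF ρ hkN, numFlux_eq_PhiF σ hkN]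
      have hχk : χ k = if σ ⟨k, Nat.lt_of_succ_lt hkN⟩ < ρ ⟨k, Nat.lt_of_succ_lt hkN⟩
          then (1:ℝ) else 0 := by rw [hχ, dif_pos hk0]
      have hχk1 : χ (k+1) = if σ ⟨k+1, hkN⟩ < ρ ⟨k+1, hkN⟩ then (1:ℝ) else 0 := by
        rw [hχ, dif_pos hkN]
      by_cases hA : σ ⟨k, Nat.lt_of_succ_lt hkN⟩ < ρ ⟨k, Nat.lt_of_succ_lt hkN⟩ <;>
        by_cases hB : σ ⟨k+1, hkN⟩ < ρ ⟨k+1, hkN⟩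
      · rw [hχk, hχk1, if_pos hA, if_pos hB, sub_self, zero_mul]
      · rw [hχk, hχk1, if_pos hA, if_neg hB, sub_zero, one_mul, hgval]
        have := PhiF_mono hΔxpos hm1_mono hm1_nonneg hm2_anti hm2_nonneg hU'_mono
          (V ⟨k, Nat.lt_of_succ_lt hkN⟩) (V ⟨k+1, hkN⟩)
          (hσ _) (hσ _) (hρ _) (hρ _) hA.le (not_lt.mp hB)
        linarith
      · rw [hχk, hχk1, if_neg hA, if_pos hB, zero_sub, neg_mul, one_mul, hgval]
        have := PhiF_mono hΔxpos hm1_mono hm1_nonneg hm2_anti hm2_nonneg hU'_mono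
          (V ⟨k, Nat.lt_of_succ_lt hkN⟩) (V ⟨k+1, hkN⟩)
          (hρ _) (hρ _) (hσ _) (hσ _) (not_lt.mp hA) hB.le
        linarith
      · rw [hχk, hχk1, if_neg hA, if_neg hB, sub_self, zero_mul]
    have hsum2 : 0 ≤ ∑ k ∈ Finset.range (N-1), (χ k - χ (k+1)) * g k :=
      Finset.sum_nonneg hterm
    have hpos : 0 < ∑ i ∈ S, (ρ i - σ i) := by
      apply Finset.sum_pos
      · intro i hiS
        rw [hSdef, Finset.mem_filter] at hiS
        linarith [hiS.2]
      · exact ⟨i0, hi0S⟩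
    have hcombine : (0:ℝ) = ∑ i ∈ S, (ρ i - σ i) +
        Δt / Δx * ∑ k ∈ Finset.range (N-1), (χ k - χ (k+1)) * g k := by
      calc (0:ℝ) = ∑ i ∈ S, (Hmap N Δx Δt V m1 m2 U' 1 ρ i -
          Hmap N Δx Δt V m1 m2 U' 1 σ i) := hsum0.symm
        _ = ∑ i ∈ S, ((ρ i - σ i) +
            Δt / Δx * (g (i:ℕ) - (if (i:ℕ) = 0 then 0 else g ((i:ℕ)-1)))) :=
          Finset.sum_congr rfl (fun i _ => hexpand i)
        _ = ∑ i ∈ S, (ρ i - σ i) +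
            Δt / Δx * ∑ i ∈ S, (g (i:ℕ) - (if (i:ℕ) = 0 then 0 else g ((i:ℕ)-1))) := by
          rw [Finset.sum_add_distrib, Finset.mul_sum]
        _ = ∑ i ∈ S, (ρ i - σ i) +
            Δt / Δx * ∑ k ∈ Finset.range (N-1), (χ k - χ (k+1)) * g k := by rw [hsum1]
    linarith [mul_nonneg hc.le hsum2]
  -- conclusion
  refine ⟨ρs, ⟨fun i => hboxIoo (hρs_box i), funext hkey⟩, ?_⟩
  rintro y ⟨hy1, hy2⟩
  funext i
  exact le_antisymm
    (hle y ρs hy1 (fun j => hboxIoo (hρs_box j)) hy2 (funext hkey) i)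
    (hle ρs y (fun j => hboxIoo (hρs_box j)) hy1 (funext hkey) hy2 i)
end

section
/- Assume m¹ : [0,α] → [0,∞) is continuous, nondecreasing, with m¹(0) = 0 and m¹ > 0 on (0,α]; m² : [0,α] → [0,∞) is continuous, nonincreasing, with m²(α) = 0 and m² > 0 on [0,α); and U′ : (0,α) → ℝ is a strictly increasing bijection of (0,α) onto ℝ. Then for every M ∈ (0,α) there is exactly one constant C ∈ ℝ such that Δx·Σ_{i=1}^N (U′)⁻¹(C − V_i) = M, and the vector ρ^∞ defined by ρ^∞_i = (U′)⁻¹(C − V_i) is the unique ρ ∈ (0,α)^N satisfying both H(ρ) = ρ and Δx·Σ_{i=1}^N ρ_i = M. -/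
open Set Finset

lemma Wfacts (α : ℝ) (U' W : ℝ → ℝ)
    (hU' : StrictMonoOn U' (Ioo 0 α))
    (hW : ∀ y : ℝ, W y ∈ Ioo 0 α ∧ U' (W y) = y) :
    StrictMono W ∧ Continuous W ∧ ∀ t ∈ Ioo 0 α, W (U' t) = t := by
  have hWmono : StrictMono W := by
    intro a b hab
    rcases lt_trichotomy (W a) (W b) with h | h | h
    · exact h
    · exfalso; rw [← (hW a).2, ← (hW b).2, h] at hab; exact lt_irrefl _ hab
    · exfalso
      have := hU' (hW b).1 (hW a).1 h
      rw [(hW a).2, (hW b).2] at this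
      exact absurd hab (not_lt.2 this.le)
  have hWU : ∀ t ∈ Ioo 0 α, W (U' t) = t := by
    intro t ht
    exact hU'.injOn (hW (U' t)).1 ht (hW (U' t)).2
  refine ⟨hWmono, ?_, hWU⟩
  have hsurj : Function.Surjective (fun y => (⟨W y, (hW y).1⟩ : Ioo 0 α)) := by
    rintro ⟨t, ht⟩
    exact ⟨U' t, Subtype.ext (hWU t ht)⟩
  have hmono' : StrictMono (fun y => (⟨W y, (hW y).1⟩ : Ioo 0 α)) := fun a b hab => hWmono hab
  let e := StrictMono.orderIsoOfSurjective _ hmono' hsurj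
  have h1 : Continuous (fun y => (⟨W y, (hW y).1⟩ : Ioo 0 α)) := by
    have := OrderIso.continuous e
    exact this
  have h2 : Continuous (fun y => ((⟨W y, (hW y).1⟩ : Ioo 0 α) : ℝ)) :=
    continuous_subtype_val.comp h1
  simpa using h2

lemma flux_zero_iff (A B v : ℝ) (hA : 0 < A) (hB : 0 < B)
    (h : A * max v 0 + B * min v 0 = 0) : v = 0 := by
  rcases lt_trichotomy v 0 with hv | hv | hv
  · rw [max_eq_right hv.le, min_eq_left hv.le] at h
    nlinarith
  · exact hv
  · rw [max_eq_left hv.le, min_eq_right hv.le] at h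
    nlinarith

/-- The discrete steady state ρ^∞_i = (U′)⁻¹(C − V_i): uniqueness of the mass constant
and uniqueness of the fixed point of the scheme in (0,α)^N with prescribed mass. -/
theorem scheme_unique_steady_state
    (N : ℕ) (hN : 2 ≤ N) (Δx Δt : ℝ) (hΔx : Δx = 1 / N) (hΔt : 0 < Δt)
    (α : ℝ) (hα : 0 < α) (V : Fin N → ℝ)
    (m1 m2 : ℝ → ℝ)
    (hm1_cont : ContinuousOn m1 (Icc 0 α)) (hm1_mono : MonotoneOn m1 (Icc 0 α))
    (hm10 : m1 0 = 0) (hm1_pos : ∀ s ∈ Ioc 0 α, 0 < m1 s)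
    (hm1_nonneg : ∀ s ∈ Icc 0 α, 0 ≤ m1 s)
    (hm2_cont : ContinuousOn m2 (Icc 0 α)) (hm2_anti : AntitoneOn m2 (Icc 0 α))
    (hm2α : m2 α = 0) (hm2_pos : ∀ s ∈ Ico 0 α, 0 < m2 s)
    (hm2_nonneg : ∀ s ∈ Icc 0 α, 0 ≤ m2 s)
    (U' : ℝ → ℝ) (hU'_smono : StrictMonoOn U' (Ioo 0 α))
    (W : ℝ → ℝ) (hW : ∀ y : ℝ, W y ∈ Ioo 0 α ∧ U' (W y) = y)
    (M : ℝ) (hM : M ∈ Ioo 0 α) :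
    (∃! C : ℝ, Δx * ∑ i, W (C - V i) = M) ∧
    (∀ C : ℝ, Δx * ∑ i, W (C - V i) = M →
      (Hmap N Δx Δt V m1 m2 U' 1 (fun i => W (C - V i)) = fun i => W (C - V i)) ∧
      ∀ ρ : Fin N → ℝ, (∀ i, ρ i ∈ Ioo 0 α) →
        Hmap N Δx Δt V m1 m2 U' 1 ρ = ρ →
        Δx * ∑ i, ρ i = M →
        ρ = fun i => W (C - V i)) := by
  obtain ⟨hWmono, hWcont, hWU⟩ := Wfacts α U' W hU'_smono hW
  have hNpos : (0:ℝ) < N := by positivity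
  have hNne : (N:ℝ) ≠ 0 := hNpos.ne'
  have hΔxpos : 0 < Δx := by rw [hΔx]; positivity
  have hNe : (Finset.univ : Finset (Fin N)).Nonempty := by
    refine ⟨⟨0, by omega⟩, mem_univ _⟩
  -- constant-sum computation
  have hconst : ∀ x : ℝ, Δx * ∑ _i : Fin N, x = x := by
    intro x
    rw [Finset.sum_const, Finset.card_univ, Fintype.card_fin, hΔx]
    field_simp
    rw [nsmul_eq_mul]
  set f : ℝ → ℝ := fun C => Δx * ∑ i, W (C - V i) with hf
  have hfmono : StrictMono f := by
    intro a b hab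
    apply mul_lt_mul_of_pos_left _ hΔxpos
    exact Finset.sum_lt_sum_of_nonempty hNe fun i _ => hWmono (by linarith)
  have hfcont : Continuous f := by
    apply continuous_const.mul
    exact continuous_finset_sum _ fun i _ => hWcont.comp (continuous_id.sub continuous_const)
  -- existence of C
  obtain ⟨jmin, -, hjmin⟩ := Finset.exists_min_image Finset.univ V hNe
  obtain ⟨jmax, -, hjmax⟩ := Finset.exists_max_image Finset.univ V hNe
  have hxlo : M / 2 ∈ Ioo (0:ℝ) α := ⟨by linarith [hM.1], by linarith [hM.1, hM.2]⟩
  have hxhi : (M + α) / 2 ∈ Ioo (0:ℝ) α := ⟨by linarith [hM.1], by linarith [hM.2]⟩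
  set Clo := U' (M / 2) + V jmin with hClo
  set Chi := U' ((M + α) / 2) + V jmax with hChi
  have hflo : f Clo ≤ M := by
    have hb : ∀ i : Fin N, W (Clo - V i) ≤ M / 2 := by
      intro i
      have : Clo - V i ≤ U' (M / 2) := by
        have := hjmin i (mem_univ i); simp [hClo]; linarith
      calc W (Clo - V i) ≤ W (U' (M / 2)) := hWmono.monotone this
        _ = M / 2 := hWU _ hxlo
    calc f Clo ≤ Δx * ∑ _i : Fin N, (M / 2) := by
          apply mul_le_mul_of_nonneg_left _ hΔxpos.le
          exact Finset.sum_le_sum fun i _ => hb i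
      _ = M / 2 := hconst _
      _ ≤ M := by linarith [hM.1]
  have hfhi : M ≤ f Chi := by
    have hb : ∀ i : Fin N, (M + α) / 2 ≤ W (Chi - V i) := by
      intro i
      have : U' ((M + α) / 2) ≤ Chi - V i := by
        have := hjmax i (mem_univ i); simp [hChi]; linarith
      calc (M + α) / 2 = W (U' ((M + α) / 2)) := (hWU _ hxhi).symm
        _ ≤ W (Chi - V i) := hWmono.monotone this
    calc M ≤ (M + α) / 2 := by linarith [hM.2]
      _ = Δx * ∑ _i : Fin N, ((M + α) / 2) := (hconst _).symm
      _ ≤ f Chi := by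
          apply mul_le_mul_of_nonneg_left _ hΔxpos.le
          exact Finset.sum_le_sum fun i _ => hb i
  have hMmem : M ∈ uIcc (f Clo) (f Chi) := by
    rw [Set.uIcc_of_le (by linarith : f Clo ≤ f Chi)]
    exact ⟨hflo, hfhi⟩
  obtain ⟨C₀, -, hC₀⟩ := intermediate_value_uIcc (hfcont.continuousOn (s := uIcc Clo Chi)) hMmem
  have hEU : ∃! C : ℝ, Δx * ∑ i, W (C - V i) = M := by
    refine ⟨C₀, hC₀, fun C hC => hfmono.injective (hC.trans hC₀.symm)⟩
  refine ⟨hEU, fun C hC => ?_⟩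
  -- part 2a: ρ∞ is a fixed point
  have hfix : Hmap N Δx Δt V m1 m2 U' 1 (fun i => W (C - V i)) = fun i => W (C - V i) := by
    funext i
    have hvel : ∀ k : ℕ, vel N Δx V U' (fun i => W (C - V i)) k = 0 := by
      intro k
      unfold vel
      split
      · have h1 := (hW (C - V ⟨k + 1, by omega⟩)).2
        have h2 := (hW (C - V ⟨k, by omega⟩)).2
        rw [h1, h2]
        ring
      · rfl
    have hflux : ∀ k : ℕ, numFlux N Δx V m1 m2 U' (fun i => W (C - V i)) k = 0 := by
      intro k
      unfold numFlux
      split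
      · rw [hvel]; simp
      · rfl
    simp [Hmap, hflux]
  refine ⟨hfix, fun ρ hρ hHρ hmass => ?_⟩
  -- part 2b: uniqueness of fixed point
  have hq : Δt / Δx ≠ 0 := by positivity
  have hFdiff : ∀ i : Fin N,
      numFlux N Δx V m1 m2 U' ρ i -
        (if (i : ℕ) = 0 then 0 else numFlux N Δx V m1 m2 U' ρ ((i : ℕ) - 1)) = 0 := by
    intro i
    have := congrFun hHρ i
    simp only [Hmap, one_mul] at this
    have h2 : Δt / Δx * (numFlux N Δx V m1 m2 U' ρ i -
        if (i : ℕ) = 0 then 0 else numFlux N Δx V m1 m2 U' ρ ((i : ℕ) - 1)) = 0 := by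
      linarith
    exact (mul_eq_zero.1 h2).resolve_left hq
  have hFzero : ∀ k : ℕ, k < N → numFlux N Δx V m1 m2 U' ρ k = 0 := by
    intro k
    induction k with
    | zero =>
      intro hk
      have := hFdiff ⟨0, hk⟩
      simpa using this
    | succ n ih =>
      intro hk
      have := hFdiff ⟨n + 1, hk⟩
      simp only [Fin.val_mk, Nat.succ_ne_zero, if_false, Nat.add_sub_cancel] at this
      have hn := ih (by omega)
      linarith
  -- velocities are zero
  have hstep : ∀ k : ℕ, (h : k + 1 < N) →
      U' (ρ ⟨k + 1, h⟩) + V ⟨k + 1, h⟩ = U' (ρ ⟨k, Nat.lt_of_succ_lt h⟩) + V ⟨k, Nat.lt_of_succ_lt h⟩ := by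
    intro k h
    have hF := hFzero k (Nat.lt_of_succ_lt h)
    unfold numFlux at hF
    rw [dif_pos h] at hF
    have hA : 0 < m1 (ρ ⟨k, Nat.lt_of_succ_lt h⟩) * m2 (ρ ⟨k + 1, h⟩) := by
      apply mul_pos
      · exact hm1_pos _ ⟨(hρ _).1, (hρ _).2.le⟩
      · exact hm2_pos _ ⟨(hρ _).1.le, (hρ _).2⟩
    have hB : 0 < m1 (ρ ⟨k + 1, h⟩) * m2 (ρ ⟨k, Nat.lt_of_succ_lt h⟩) := by
      apply mul_pos
      · exact hm1_pos _ ⟨(hρ _).1, (hρ _).2.le⟩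
      · exact hm2_pos _ ⟨(hρ _).1.le, (hρ _).2⟩
    have hv := flux_zero_iff _ _ _ hA hB hF
    unfold vel at hv
    rw [dif_pos h] at hv
    have := neg_eq_zero.1 hv
    have := (div_eq_zero_iff.1 this).resolve_right hΔxpos.ne'
    linarith
  -- ξ constant
  have h0N : 0 < N := by omega
  have hconst' : ∀ k : ℕ, (hk : k < N) →
      U' (ρ ⟨k, hk⟩) + V ⟨k, hk⟩ = U' (ρ ⟨0, h0N⟩) + V ⟨0, h0N⟩ := by
    intro k
    induction k with
    | zero => intro hk; rfl
    | succ n ih =>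
      intro hk
      rw [hstep n hk]
      exact ih (by omega)
  set C' := U' (ρ ⟨0, h0N⟩) + V ⟨0, h0N⟩ with hC'
  have hρW : ∀ i : Fin N, ρ i = W (C' - V i) := by
    intro i
    have h1 : U' (ρ i) + V i = C' := by
      have := hconst' i.1 i.2
      simpa using this
    have h2 : U' (ρ i) = C' - V i := by linarith
    have : W (U' (ρ i)) = ρ i := hWU _ (hρ i)
    rw [h2] at this
    exact this.symm
  have hmass' : f C' = M := by
    rw [hf]
    calc Δx * ∑ i, W (C' - V i) = Δx * ∑ i, ρ i := by
          congr 1; exact Finset.sum_congr rfl fun i _ => (hρW i).symm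
      _ = M := hmass
  have hCC : C' = C := hfmono.injective (hmass'.trans hC.symm)
  funext i
  rw [hρW i, hCC]
end

section
/- Assume U : [0,α] → ℝ is convex and continuously differentiable on [0,α] with derivative U′, that m¹ : [0,α] → [0,∞) is continuous, nondecreasing with m¹(0) = 0, and that m² : [0,α] → [0,∞) is continuous, nonincreasing with m²(α) = 0. Then: (i) for every ρ⁰ ∈ [0,α]^N and every sequence (ρⁿ)_{n≥0} in [0,α]^N with H(ρ^{n+1}) = ρⁿ for all n ≥ 0, the limit ρ^∞ = lim_{n→∞} ρⁿ exists in ℝ^N and is a fixed point: H(ρ^∞) = ρ^∞; (ii) if (ηⁿ)_{n≥0} is another such sequence, starting from η⁰ ∈ [0,α]^N and with limit η^∞, then Σ_{i=1}^N |ρ^∞_i − η^∞_i| ≤ Σ_{i=1}^N |ρ⁰_i − η⁰_i| (the time-limit operator is an ℓ¹-contraction). -/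
open Set Finset

lemma tangent_le {α : ℝ} {U U' : ℝ → ℝ} (hU_conv : ConvexOn ℝ (Icc 0 α) U)
    (hU_deriv : ∀ s ∈ Icc 0 α, HasDerivWithinAt U (U' s) (Icc 0 α) s)
    {a b : ℝ} (ha : a ∈ Icc 0 α) (hb : b ∈ Icc 0 α) :
    U a + U' a * (b - a) ≤ U b := by
  rcases lt_trichotomy a b with h | h | h
  · have h2 := hU_conv.le_slope_of_hasDerivWithinAt ha hb h (hU_deriv a ha)
    rw [slope_def_field] at h2
    have hba : 0 < b - a := by linarith
    have := (le_div_iff₀ hba).mp h2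
    linarith
  · simp [h]
  · have h2 := hU_conv.slope_le_of_hasDerivWithinAt hb ha h (hU_deriv a ha)
    rw [slope_def_field] at h2
    have hba : 0 < a - b := by linarith
    have := (div_le_iff₀ hba).mp h2
    linarith

lemma U'_mono {α : ℝ} {U U' : ℝ → ℝ} (hU_conv : ConvexOn ℝ (Icc 0 α) U)
    (hU_deriv : ∀ s ∈ Icc 0 α, HasDerivWithinAt U (U' s) (Icc 0 α) s) :
    MonotoneOn U' (Icc 0 α) := by
  intro x hx y hy hxy
  rcases eq_or_lt_of_le hxy with rfl | h
  · exact le_rfl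
  · have h1 := tangent_le hU_conv hU_deriv hx hy
    have h2 := tangent_le hU_conv hU_deriv hy hx
    nlinarith [sub_pos.mpr h]

/-- Shifted summation identity. -/
lemma sum_shift {N : ℕ} (hN : 1 ≤ N) (S f : ℕ → ℝ) (hf : f (N - 1) = 0) :
    ∑ i ∈ range N, S i * (f i - if i = 0 then 0 else f (i - 1)) =
      ∑ k ∈ range (N - 1), (S k - S (k + 1)) * f k := by
  obtain ⟨M, rfl⟩ : ∃ M, N = M + 1 := ⟨N - 1, (Nat.succ_pred_eq_of_pos hN).symm⟩
  simp only [Nat.add_sub_cancel] at hf ⊢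
  have h1 : ∑ i ∈ range (M + 1), S i * (f i - if i = 0 then 0 else f (i - 1)) =
      ∑ i ∈ range (M + 1), S i * f i - ∑ i ∈ range (M + 1), (if i = 0 then 0 else S i * f (i-1)) := by
    rw [← Finset.sum_sub_distrib]
    refine Finset.sum_congr rfl fun i _ => ?_
    by_cases h : i = 0 <;> simp [h] <;> ring
  rw [h1, Finset.sum_range_succ, hf, mul_zero, add_zero,
    Finset.sum_range_succ' (fun i => if i = 0 then (0:ℝ) else S i * f (i-1)) M]
  simp only [Nat.succ_ne_zero, if_false, Nat.add_sub_cancel, reduceIte, add_zero]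
  rw [← Finset.sum_sub_distrib]
  exact Finset.sum_congr rfl fun k _ => by ring


/-- Two-point flux function. -/
noncomputable def Gflux (Δx : ℝ) (m1 m2 U' : ℝ → ℝ) (Vi Vj x y : ℝ) : ℝ :=
  m1 x * m2 y * max ((U' x + Vi - (U' y + Vj)) / Δx) 0 +
    m1 y * m2 x * min ((U' x + Vi - (U' y + Vj)) / Δx) 0

lemma vel_eq {N : ℕ} {Δx : ℝ} {V : Fin N → ℝ} {U' : ℝ → ℝ} {ρ : Fin N → ℝ}
    {k : ℕ} (h : k + 1 < N) :
    vel N Δx V U' ρ k =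
      (U' (ρ ⟨k, Nat.lt_of_succ_lt h⟩) + V ⟨k, Nat.lt_of_succ_lt h⟩ -
        (U' (ρ ⟨k + 1, h⟩) + V ⟨k + 1, h⟩)) / Δx := by
  rw [vel, dif_pos h]; ring

lemma numFlux_eq {N : ℕ} {Δx : ℝ} {V : Fin N → ℝ} {m1 m2 U' : ℝ → ℝ} {ρ : Fin N → ℝ}
    {k : ℕ} (h : k + 1 < N) :
    numFlux N Δx V m1 m2 U' ρ k =
      Gflux Δx m1 m2 U' (V ⟨k, Nat.lt_of_succ_lt h⟩) (V ⟨k + 1, h⟩)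
        (ρ ⟨k, Nat.lt_of_succ_lt h⟩) (ρ ⟨k + 1, h⟩) := by
  rw [numFlux, dif_pos h, Gflux, vel_eq h]

lemma numFlux_boundary {N : ℕ} {Δx : ℝ} {V : Fin N → ℝ} {m1 m2 U' : ℝ → ℝ}
    {ρ : Fin N → ℝ} {k : ℕ} (h : ¬ (k + 1 < N)) :
    numFlux N Δx V m1 m2 U' ρ k = 0 := by rw [numFlux, dif_neg h]

section mono
variable {α Δx : ℝ} {m1 m2 U' : ℝ → ℝ}
variable (hΔx : 0 < Δx)
variable (hU' : MonotoneOn U' (Icc 0 α))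
variable (hm1_mono : MonotoneOn m1 (Icc 0 α)) (hm1_nonneg : ∀ s ∈ Icc 0 α, 0 ≤ m1 s)
variable (hm2_anti : AntitoneOn m2 (Icc 0 α)) (hm2_nonneg : ∀ s ∈ Icc 0 α, 0 ≤ m2 s)

include hΔx hU' hm1_mono hm1_nonneg hm2_anti hm2_nonneg

lemma Gflux_mono_left {Vi Vj x x' y : ℝ} (hx : x ∈ Icc 0 α) (hx' : x' ∈ Icc 0 α)
    (hy : y ∈ Icc 0 α) (hxx : x ≤ x') :
    Gflux Δx m1 m2 U' Vi Vj x y ≤ Gflux Δx m1 m2 U' Vi Vj x' y := by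
  have hv : (U' x + Vi - (U' y + Vj)) / Δx ≤ (U' x' + Vi - (U' y + Vj)) / Δx := by
    have := hU' hx hx' hxx
    exact div_le_div_of_nonneg_right (by linarith) hΔx.le
  set v := (U' x + Vi - (U' y + Vj)) / Δx
  set v' := (U' x' + Vi - (U' y + Vj)) / Δx
  have hmax : max v 0 ≤ max v' 0 := max_le_max hv le_rfl
  have hmin : min v 0 ≤ min v' 0 := min_le_min hv le_rfl
  have t1 : m1 x * m2 y * max v 0 ≤ m1 x' * m2 y * max v' 0 := by
    have h1 : m1 x * m2 y ≤ m1 x' * m2 y :=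
      mul_le_mul_of_nonneg_right (hm1_mono hx hx' hxx) (hm2_nonneg y hy)
    exact mul_le_mul h1 hmax (le_max_right _ _)
      (mul_nonneg (hm1_nonneg x' hx') (hm2_nonneg y hy))
  have t2 : m1 y * (m2 x * min v 0) ≤ m1 y * (m2 x' * min v' 0) := by
    apply mul_le_mul_of_nonneg_left ?_ (hm1_nonneg y hy)
    calc m2 x * min v 0 ≤ m2 x * min v' 0 :=
          mul_le_mul_of_nonneg_left hmin (hm2_nonneg x hx)
      _ ≤ m2 x' * min v' 0 :=
          mul_le_mul_of_nonpos_right (hm2_anti hx hx' hxx) (min_le_right _ _)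
  calc Gflux Δx m1 m2 U' Vi Vj x y
      = m1 x * m2 y * max v 0 + m1 y * (m2 x * min v 0) := by rw [Gflux]; ring
    _ ≤ m1 x' * m2 y * max v' 0 + m1 y * (m2 x' * min v' 0) := add_le_add t1 t2
    _ = Gflux Δx m1 m2 U' Vi Vj x' y := by rw [Gflux]; ring

lemma Gflux_anti_right {Vi Vj x y y' : ℝ} (hx : x ∈ Icc 0 α) (hy : y ∈ Icc 0 α)
    (hy' : y' ∈ Icc 0 α) (hyy : y ≤ y') :
    Gflux Δx m1 m2 U' Vi Vj x y' ≤ Gflux Δx m1 m2 U' Vi Vj x y := by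
  have hv : (U' x + Vi - (U' y' + Vj)) / Δx ≤ (U' x + Vi - (U' y + Vj)) / Δx := by
    have := hU' hy hy' hyy
    exact div_le_div_of_nonneg_right (by linarith) hΔx.le
  set v' := (U' x + Vi - (U' y' + Vj)) / Δx
  set v := (U' x + Vi - (U' y + Vj)) / Δx
  have hmax : max v' 0 ≤ max v 0 := max_le_max hv le_rfl
  have hmin : min v' 0 ≤ min v 0 := min_le_min hv le_rfl
  have t1 : m1 x * (m2 y' * max v' 0) ≤ m1 x * (m2 y * max v 0) := by
    apply mul_le_mul_of_nonneg_left ?_ (hm1_nonneg x hx)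
    calc m2 y' * max v' 0 ≤ m2 y * max v' 0 :=
          mul_le_mul_of_nonneg_right (hm2_anti hy hy' hyy) (le_max_right _ _)
      _ ≤ m2 y * max v 0 := mul_le_mul_of_nonneg_left hmax (hm2_nonneg y hy)
  have t2 : m1 y' * m2 x * min v' 0 ≤ m1 y * m2 x * min v 0 := by
    calc m1 y' * m2 x * min v' 0 ≤ m1 y' * m2 x * min v 0 := by
          apply mul_le_mul_of_nonneg_left hmin
            (mul_nonneg (hm1_nonneg y' hy') (hm2_nonneg x hx))
      _ ≤ m1 y * m2 x * min v 0 := by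
          apply mul_le_mul_of_nonpos_right ?_ (min_le_right _ _)
          exact mul_le_mul_of_nonneg_right (hm1_mono hy hy' hyy) (hm2_nonneg x hx)
  calc Gflux Δx m1 m2 U' Vi Vj x y'
      = m1 x * (m2 y' * max v' 0) + m1 y' * m2 x * min v' 0 := by rw [Gflux]; ring
    _ ≤ m1 x * (m2 y * max v 0) + m1 y * m2 x * min v 0 := add_le_add t1 t2
    _ = Gflux Δx m1 m2 U' Vi Vj x y := by rw [Gflux]; ring

end mono

lemma l1_contraction (N : ℕ) (hN : 1 ≤ N) (Δx Δt : ℝ) (hΔx : 0 < Δx) (hΔt : 0 ≤ Δt)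
    (α : ℝ) (V : Fin N → ℝ) (m1 m2 U' : ℝ → ℝ)
    (hU' : MonotoneOn U' (Icc 0 α))
    (hm1_mono : MonotoneOn m1 (Icc 0 α)) (hm1_nonneg : ∀ s ∈ Icc 0 α, 0 ≤ m1 s)
    (hm2_anti : AntitoneOn m2 (Icc 0 α)) (hm2_nonneg : ∀ s ∈ Icc 0 α, 0 ≤ m2 s)
    (a b : Fin N → ℝ) (ha : ∀ i, a i ∈ Icc 0 α) (hb : ∀ i, b i ∈ Icc 0 α) :
    ∑ i, |a i - b i| ≤
      ∑ i, |Hmap N Δx Δt V m1 m2 U' 1 a i - Hmap N Δx Δt V m1 m2 U' 1 b i| := by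
  classical
  set Fa := numFlux N Δx V m1 m2 U' a with hFa
  set Fb := numFlux N Δx V m1 m2 U' b with hFb
  set F : ℕ → ℝ := fun k => Fa k - Fb k with hF
  set S : ℕ → ℝ := fun k =>
    if h : k < N then (if b ⟨k, h⟩ ≤ a ⟨k, h⟩ then (1:ℝ) else -1) else 0 with hS
  have hSabs : ∀ i : Fin N, S (i : ℕ) * (a i - b i) = |a i - b i| := by
    intro i
    simp only [hS, dif_pos i.isLt]
    by_cases h : b i ≤ a i
    · rw [if_pos (by simpa using h), abs_of_nonneg (by simpa using sub_nonneg.mpr h)]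
      ring
    · push_neg at h
      rw [if_neg (by simpa using h.not_ge),
        abs_of_neg (by simpa using sub_neg.mpr h)]
      ring
  have hSle : ∀ i : Fin N, ∀ x : ℝ, S (i : ℕ) * x ≤ |x| := by
    intro i x
    simp only [hS, dif_pos i.isLt, Fin.eta]
    split
    · simpa using le_abs_self x
    · rw [neg_one_mul]; exact neg_le_abs x
  have hFlast : F (N - 1) = 0 := by
    have h : ¬ (N - 1 + 1 < N) := by omega
    simp [hF, hFa, hFb, numFlux_boundary h]
  have hterm : ∀ k ∈ range (N - 1), 0 ≤ (S k - S (k + 1)) * F k := by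
    intro k hk
    rw [Finset.mem_range] at hk
    have hk1 : k + 1 < N := by omega
    have hk0 : k < N := by omega
    have hFk : F k = Gflux Δx m1 m2 U' (V ⟨k, hk0⟩) (V ⟨k + 1, hk1⟩) (a ⟨k, hk0⟩) (a ⟨k+1, hk1⟩)
        - Gflux Δx m1 m2 U' (V ⟨k, hk0⟩) (V ⟨k + 1, hk1⟩) (b ⟨k, hk0⟩) (b ⟨k+1, hk1⟩) := by
      simp only [hF, hFa, hFb, numFlux_eq hk1]
    simp only [hS, dif_pos hk1, dif_pos hk0]
    by_cases h1 : b ⟨k, hk0⟩ ≤ a ⟨k, hk0⟩ <;>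
      by_cases h2 : b ⟨k+1, hk1⟩ ≤ a ⟨k+1, hk1⟩
    · rw [if_pos h1, if_pos h2, sub_self, zero_mul]
    · push_neg at h2
      rw [if_pos h1, if_neg h2.not_ge]
      have c1 := Gflux_anti_right hΔx hU' hm1_mono hm1_nonneg hm2_anti hm2_nonneg
        (hb ⟨k, hk0⟩) (ha ⟨k+1, hk1⟩) (hb ⟨k+1, hk1⟩) h2.le
        (Vi := V ⟨k, hk0⟩) (Vj := V ⟨k + 1, hk1⟩)
      have c2 := Gflux_mono_left hΔx hU' hm1_mono hm1_nonneg hm2_anti hm2_nonneg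
        (hb ⟨k, hk0⟩) (ha ⟨k, hk0⟩) (ha ⟨k+1, hk1⟩) h1
        (Vi := V ⟨k, hk0⟩) (Vj := V ⟨k + 1, hk1⟩)
      rw [hFk]; nlinarith
    · push_neg at h1
      rw [if_neg h1.not_ge, if_pos h2]
      have c1 := Gflux_anti_right hΔx hU' hm1_mono hm1_nonneg hm2_anti hm2_nonneg
        (ha ⟨k, hk0⟩) (hb ⟨k+1, hk1⟩) (ha ⟨k+1, hk1⟩) h2
        (Vi := V ⟨k, hk0⟩) (Vj := V ⟨k + 1, hk1⟩)
      have c2 := Gflux_mono_left hΔx hU' hm1_mono hm1_nonneg hm2_anti hm2_nonneg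
        (ha ⟨k, hk0⟩) (hb ⟨k, hk0⟩) (hb ⟨k+1, hk1⟩) h1.le
        (Vi := V ⟨k, hk0⟩) (Vj := V ⟨k + 1, hk1⟩)
      rw [hFk]; nlinarith
    · rw [if_neg h1, if_neg h2, sub_self, zero_mul]
  have expand : ∀ i : Fin N,
      Hmap N Δx Δt V m1 m2 U' 1 a i - Hmap N Δx Δt V m1 m2 U' 1 b i =
        (a i - b i) + (Δt / Δx) *
          (F (i : ℕ) - if (i : ℕ) = 0 then 0 else F ((i : ℕ) - 1)) := by
    intro i
    simp only [Hmap, one_mul, hF, hFa, hFb]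
    by_cases h : (i : ℕ) = 0 <;> simp only [h, if_true, if_false, reduceIte] <;> ring
  have key : ∑ i : Fin N, S (i : ℕ) * (Hmap N Δx Δt V m1 m2 U' 1 a i - Hmap N Δx Δt V m1 m2 U' 1 b i)
      = ∑ i : Fin N, S (i : ℕ) * (a i - b i) +
        (Δt / Δx) * ∑ k ∈ range (N - 1), (S k - S (k + 1)) * F k := by
    rw [← sum_shift hN S F hFlast,
      ← Fin.sum_univ_eq_sum_range (fun k => S k * (F k - if k = 0 then 0 else F (k - 1))) N]
    rw [Finset.mul_sum, ← Finset.sum_add_distrib]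
    refine Finset.sum_congr rfl fun i _ => ?_
    rw [expand i]; ring
  have step1 : ∑ i, |a i - b i| =
      ∑ i : Fin N, S (i : ℕ) * (a i - b i) := by
    exact (Finset.sum_congr rfl fun i _ => (hSabs i).symm)
  rw [step1]
  have step2 : ∑ i : Fin N, S (i : ℕ) * (a i - b i) ≤
      ∑ i : Fin N, S (i : ℕ) * (Hmap N Δx Δt V m1 m2 U' 1 a i - Hmap N Δx Δt V m1 m2 U' 1 b i) := by
    rw [key]
    have : 0 ≤ (Δt / Δx) * ∑ k ∈ range (N - 1), (S k - S (k + 1)) * F k :=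
      mul_nonneg (div_nonneg hΔt hΔx.le) (Finset.sum_nonneg hterm)
    linarith
  exact step2.trans (Finset.sum_le_sum fun i _ => hSle i _)

lemma flux_mul_vel_nonneg (N : ℕ) (Δx : ℝ) (α : ℝ) (V : Fin N → ℝ) (m1 m2 U' : ℝ → ℝ)
    (hm1_nonneg : ∀ s ∈ Icc 0 α, 0 ≤ m1 s) (hm2_nonneg : ∀ s ∈ Icc 0 α, 0 ≤ m2 s)
    (ρ : Fin N → ℝ) (hρ : ∀ i, ρ i ∈ Icc 0 α) (k : ℕ) :
    0 ≤ numFlux N Δx V m1 m2 U' ρ k * vel N Δx V U' ρ k := by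
  by_cases h : k + 1 < N
  · rw [numFlux, dif_pos h]
    set v := vel N Δx V U' ρ k
    have hA : 0 ≤ m1 (ρ ⟨k, Nat.lt_of_succ_lt h⟩) * m2 (ρ ⟨k + 1, h⟩) :=
      mul_nonneg (hm1_nonneg _ (hρ _)) (hm2_nonneg _ (hρ _))
    have hB : 0 ≤ m1 (ρ ⟨k + 1, h⟩) * m2 (ρ ⟨k, Nat.lt_of_succ_lt h⟩) :=
      mul_nonneg (hm1_nonneg _ (hρ _)) (hm2_nonneg _ (hρ _))
    rcases le_total 0 v with hv | hv
    · rw [max_eq_left hv, min_eq_right hv]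
      nlinarith [mul_nonneg (mul_nonneg hA hv) hv]
    · rw [max_eq_right hv, min_eq_left hv]
      nlinarith [mul_nonneg hB (mul_self_nonneg v)]
  · simp [numFlux_boundary h]

lemma flux_zero_of_mul_vel_zero (N : ℕ) (Δx : ℝ) (α : ℝ) (V : Fin N → ℝ)
    (m1 m2 U' : ℝ → ℝ)
    (ρ : Fin N → ℝ) (k : ℕ)
    (hz : numFlux N Δx V m1 m2 U' ρ k * vel N Δx V U' ρ k = 0) :
    numFlux N Δx V m1 m2 U' ρ k = 0 := by
  by_cases h : k + 1 < N
  · rw [numFlux, dif_pos h] at hz ⊢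
    set v := vel N Δx V U' ρ k
    set A := m1 (ρ ⟨k, Nat.lt_of_succ_lt h⟩) * m2 (ρ ⟨k + 1, h⟩)
    set B := m1 (ρ ⟨k + 1, h⟩) * m2 (ρ ⟨k, Nat.lt_of_succ_lt h⟩)
    rcases eq_or_ne v 0 with hv0 | hv0
    · rw [hv0]; simp
    rcases le_total 0 v with hv | hv
    · rw [max_eq_left hv, min_eq_right hv] at hz ⊢
      rw [mul_zero, add_zero] at hz ⊢
      rcases mul_eq_zero.mp hz with h' | h'
      · exact h'
      · exact absurd h' hv0
    · rw [max_eq_right hv, min_eq_left hv] at hz ⊢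
      rw [mul_zero, zero_add] at hz ⊢
      rcases mul_eq_zero.mp hz with h' | h'
      · exact h'
      · exact absurd h' hv0
  · exact numFlux_boundary h

lemma energy_step (N : ℕ) (hN : 1 ≤ N) (Δx Δt : ℝ) (hΔx : 0 < Δx)
    (α : ℝ) (V : Fin N → ℝ) (U U' m1 m2 : ℝ → ℝ)
    (hU_conv : ConvexOn ℝ (Icc 0 α) U)
    (hU_deriv : ∀ s ∈ Icc 0 α, HasDerivWithinAt U (U' s) (Icc 0 α) s)
    (a : Fin N → ℝ) (ha : ∀ i, a i ∈ Icc 0 α)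
    (hHa : ∀ i, Hmap N Δx Δt V m1 m2 U' 1 a i ∈ Icc 0 α) :
    ∑ i, (U (a i) + V i * a i) +
        Δt * ∑ k ∈ range (N - 1), numFlux N Δx V m1 m2 U' a k * vel N Δx V U' a k ≤
      ∑ i, (U (Hmap N Δx Δt V m1 m2 U' 1 a i) + V i * Hmap N Δx Δt V m1 m2 U' 1 a i) := by
  classical
  set b := Hmap N Δx Δt V m1 m2 U' 1 a with hbdef
  set F := numFlux N Δx V m1 m2 U' a with hFdef
  set Ξ : ℕ → ℝ := fun k => if h : k < N then U' (a ⟨k, h⟩) + V ⟨k, h⟩ else 0 with hΞ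
  have hab : ∀ i : Fin N, a i - b i =
      -((Δt / Δx) * (F (i : ℕ) - if (i : ℕ) = 0 then 0 else F ((i : ℕ) - 1))) := by
    intro i; simp only [hbdef, Hmap, one_mul, hFdef]; ring
  have hFlast : F (N - 1) = 0 := numFlux_boundary (by omega)
  have htel : ∑ i : Fin N, Ξ (i : ℕ) * (F (i : ℕ) - if (i : ℕ) = 0 then 0 else F ((i : ℕ) - 1)) =
      ∑ k ∈ range (N - 1), (Ξ k - Ξ (k + 1)) * F k := by
    calc ∑ i : Fin N, Ξ (i : ℕ) * (F (i : ℕ) - if (i : ℕ) = 0 then 0 else F ((i : ℕ) - 1))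
        = ∑ i ∈ range N, Ξ i * (F i - if i = 0 then 0 else F (i - 1)) :=
          Fin.sum_univ_eq_sum_range (fun k => Ξ k * (F k - if k = 0 then 0 else F (k - 1))) N
      _ = _ := sum_shift hN Ξ F hFlast
  have hxi : ∀ k ∈ range (N - 1), (Ξ k - Ξ (k + 1)) * F k =
      Δx * (F k * vel N Δx V U' a k) := by
    intro k hk
    rw [Finset.mem_range] at hk
    have hk1 : k + 1 < N := by omega
    have hk0 : k < N := by omega
    rw [vel_eq hk1, hΞ]
    simp only [dif_pos hk0, dif_pos hk1]
    field_simp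
  have tangent_i : ∀ i : Fin N, U (a i) - U (b i) ≤ U' (a i) * (a i - b i) := by
    intro i
    have h1 := tangent_le hU_conv hU_deriv (ha i) (hHa i)
    have h2 : U' (a i) * (a i - b i) = -(U' (a i) * (b i - a i)) := by ring
    linarith
  have sumineq : ∑ i, (U (a i) + V i * a i) - ∑ i, (U (b i) + V i * b i) ≤
      ∑ i : Fin N, Ξ (i : ℕ) * (a i - b i) := by
    rw [← Finset.sum_sub_distrib]
    apply Finset.sum_le_sum
    intro i _
    have hΞi : Ξ (i : ℕ) = U' (a i) + V i := by
      rw [hΞ]; simp only [dif_pos i.isLt, Fin.eta]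
    rw [hΞi]
    have h3 : (U' (a i) + V i) * (a i - b i) =
        U' (a i) * (a i - b i) + V i * (a i - b i) := by ring
    have := tangent_i i
    linarith
  have sumeq : ∑ i : Fin N, Ξ (i : ℕ) * (a i - b i) =
      -(Δt / Δx) * ∑ i : Fin N,
        Ξ (i : ℕ) * (F (i : ℕ) - if (i : ℕ) = 0 then 0 else F ((i : ℕ) - 1)) := by
    rw [Finset.mul_sum]
    refine Finset.sum_congr rfl fun i _ => ?_
    rw [hab i]; ring
  have sumeq2 : ∑ i : Fin N, Ξ (i : ℕ) * (a i - b i) =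
      -Δt * ∑ k ∈ range (N - 1), F k * vel N Δx V U' a k := by
    rw [sumeq, htel, Finset.sum_congr rfl hxi, ← Finset.mul_sum]
    field_simp
  have : ∑ i, (U (a i) + V i * a i) - ∑ i, (U (b i) + V i * b i) ≤
      -Δt * ∑ k ∈ range (N - 1), F k * vel N Δx V U' a k := by
    rw [← sumeq2]; exact sumineq
  have hFnum : ∀ k, F k = numFlux N Δx V m1 m2 U' a k := fun k => rfl
  linarith

open Filter in
lemma tendsto_flux_vel (N : ℕ) (Δx : ℝ) (α : ℝ) (V : Fin N → ℝ) (m1 m2 U' : ℝ → ℝ)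
    (hU'_cont : ContinuousOn U' (Icc 0 α))
    (hm1_cont : ContinuousOn m1 (Icc 0 α)) (hm2_cont : ContinuousOn m2 (Icc 0 α))
    (ρ : ℕ → Fin N → ℝ) (hρ : ∀ n i, ρ n i ∈ Icc 0 α) (p : Fin N → ℝ)
    (hp : ∀ i, p i ∈ Icc 0 α)
    (htend : Tendsto ρ atTop (nhds p)) (k : ℕ) :
    Tendsto (fun n => numFlux N Δx V m1 m2 U' (ρ n) k) atTop
        (nhds (numFlux N Δx V m1 m2 U' p k)) ∧
      Tendsto (fun n => vel N Δx V U' (ρ n) k) atTop (nhds (vel N Δx V U' p k)) := by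
  by_cases h : k + 1 < N
  · have hcomp : ∀ i : Fin N, Tendsto (fun n => ρ n i) atTop (nhds (p i)) :=
      fun i => tendsto_pi_nhds.mp htend i
    have hwithin : ∀ i : Fin N,
        Tendsto (fun n => ρ n i) atTop (nhdsWithin (p i) (Icc 0 α)) := fun i =>
      tendsto_nhdsWithin_iff.mpr ⟨hcomp i, Filter.Eventually.of_forall fun n => hρ n i⟩
    have hU'i : ∀ i : Fin N, Tendsto (fun n => U' (ρ n i)) atTop (nhds (U' (p i))) :=
      fun i => (hU'_cont (p i) (hp i)).tendsto.comp (hwithin i)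
    have hm1i : ∀ i : Fin N, Tendsto (fun n => m1 (ρ n i)) atTop (nhds (m1 (p i))) :=
      fun i => (hm1_cont (p i) (hp i)).tendsto.comp (hwithin i)
    have hm2i : ∀ i : Fin N, Tendsto (fun n => m2 (ρ n i)) atTop (nhds (m2 (p i))) :=
      fun i => (hm2_cont (p i) (hp i)).tendsto.comp (hwithin i)
    have hvel : Tendsto (fun n => vel N Δx V U' (ρ n) k) atTop
        (nhds (vel N Δx V U' p k)) := by
      simp only [vel, dif_pos h]
      exact ((((hU'i ⟨k + 1, h⟩).add_const _).sub
        ((hU'i ⟨k, Nat.lt_of_succ_lt h⟩).add_const _)).div_const _).neg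
    refine ⟨?_, hvel⟩
    simp only [numFlux, dif_pos h]
    exact (((hm1i _).mul (hm2i _)).mul (hvel.max tendsto_const_nhds)).add
      (((hm1i _).mul (hm2i _)).mul (hvel.min tendsto_const_nhds))
  · simp only [numFlux, vel, dif_neg h]
    exact ⟨tendsto_const_nhds, tendsto_const_nhds⟩


open Filter in
/-- Every implicit-scheme orbit in [0,α]^N converges to a fixed point of the scheme,
and the resulting time-limit operator is an ℓ¹-contraction. -/
theorem scheme_time_limit_operator
    (N : ℕ) (hN : 2 ≤ N) (Δx Δt : ℝ) (hΔx : Δx = 1 / N) (hΔt : 0 < Δt)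
    (α : ℝ) (hα : 0 < α) (V : Fin N → ℝ)
    (U U' : ℝ → ℝ) (hU_conv : ConvexOn ℝ (Icc 0 α) U)
    (hU_deriv : ∀ s ∈ Icc 0 α, HasDerivWithinAt U (U' s) (Icc 0 α) s)
    (hU'_cont : ContinuousOn U' (Icc 0 α))
    (m1 m2 : ℝ → ℝ)
    (hm1_cont : ContinuousOn m1 (Icc 0 α)) (hm1_mono : MonotoneOn m1 (Icc 0 α))
    (hm1_nonneg : ∀ s ∈ Icc 0 α, 0 ≤ m1 s) (hm10 : m1 0 = 0)
    (hm2_cont : ContinuousOn m2 (Icc 0 α)) (hm2_anti : AntitoneOn m2 (Icc 0 α))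
    (hm2_nonneg : ∀ s ∈ Icc 0 α, 0 ≤ m2 s) (hm2α : m2 α = 0) :
    (∀ ρ : ℕ → Fin N → ℝ,
      (∀ n i, ρ n i ∈ Icc 0 α) →
      (∀ n, Hmap N Δx Δt V m1 m2 U' 1 (ρ (n + 1)) = ρ n) →
      ∃ ρlim : Fin N → ℝ,
        Filter.Tendsto ρ Filter.atTop (nhds ρlim) ∧
        Hmap N Δx Δt V m1 m2 U' 1 ρlim = ρlim) ∧
    (∀ ρ η : ℕ → Fin N → ℝ, ∀ ρlim ηlim : Fin N → ℝ,
      (∀ n i, ρ n i ∈ Icc 0 α) →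
      (∀ n, Hmap N Δx Δt V m1 m2 U' 1 (ρ (n + 1)) = ρ n) →
      (∀ n i, η n i ∈ Icc 0 α) →
      (∀ n, Hmap N Δx Δt V m1 m2 U' 1 (η (n + 1)) = η n) →
      Filter.Tendsto ρ Filter.atTop (nhds ρlim) →
      Filter.Tendsto η Filter.atTop (nhds ηlim) →
      ∑ i, |ρlim i - ηlim i| ≤ ∑ i, |ρ 0 i - η 0 i|) := by
  have hN1 : 1 ≤ N := by omega
  have hΔxpos : 0 < Δx := by
    rw [hΔx]
    have : (0:ℝ) < N := by exact_mod_cast Nat.lt_of_lt_of_le Nat.zero_lt_two hN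
    positivity
  have hU'mono : MonotoneOn U' (Icc 0 α) := U'_mono hU_conv hU_deriv
  constructor
  · -- Part (i)
    intro ρ hmem horbit
    -- compactness: extract a convergent subsequence
    have hScompact : IsCompact (Set.pi Set.univ fun _ : Fin N => Icc (0:ℝ) α) :=
      isCompact_univ_pi fun _ => isCompact_Icc
    obtain ⟨p, hpS, φ, hφmono, hφtend⟩ :=
      hScompact.tendsto_subseq (fun n => Set.mem_univ_pi.mpr (hmem n))
    have hp : ∀ i, p i ∈ Icc 0 α := fun i => hpS i (Set.mem_univ i)
    -- energy and dissipation
    set E : (Fin N → ℝ) → ℝ := fun f => ∑ i, (U (f i) + V i * f i) with hE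
    set D : (Fin N → ℝ) → ℝ := fun f =>
      ∑ k ∈ range (N - 1), numFlux N Δx V m1 m2 U' f k * vel N Δx V U' f k with hD
    have hstep : ∀ n, E (ρ (n + 1)) + Δt * D (ρ (n + 1)) ≤ E (ρ n) := by
      intro n
      have h := energy_step N hN1 Δx Δt hΔxpos α V U U' m1 m2 hU_conv hU_deriv
        (ρ (n + 1)) (hmem (n + 1)) (by rw [horbit n]; exact hmem n)
      rw [horbit n] at h
      exact h
    have hDnn : ∀ n, 0 ≤ D (ρ n) := fun n =>
      Finset.sum_nonneg fun k _ =>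
        flux_mul_vel_nonneg N Δx α V m1 m2 U' hm1_nonneg hm2_nonneg (ρ n) (hmem n) k
    -- lower bound for energy
    have hUcont : ContinuousOn U (Icc 0 α) := fun s hs =>
      (hU_deriv s hs).continuousWithinAt
    obtain ⟨x0, hx0, hmin'⟩ :=
      isCompact_Icc.exists_isMinOn (nonempty_Icc.mpr hα.le) hUcont
    have hmin := isMinOn_iff.mp hmin'
    set c0 : ℝ := ∑ _i : Fin N, (U x0 - |V _i| * α) with hc0
    have hElb : ∀ n, c0 ≤ E (ρ n) := by
      intro n
      apply Finset.sum_le_sum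
      intro i _
      have h1 := hmin _ (hmem n i)
      have h2 : -(|V i| * α) ≤ V i * ρ n i := by
        have hb := hmem n i
        have : |V i * ρ n i| ≤ |V i| * α := by
          rw [abs_mul]
          exact mul_le_mul_of_nonneg_left
            (by rw [abs_of_nonneg hb.1]; exact hb.2) (abs_nonneg _)
        linarith [neg_abs_le (V i * ρ n i)]
      linarith
    -- bounded partial sums of dissipation
    have hpartial : ∀ M, Δt * ∑ n ∈ range M, D (ρ (n + 1)) ≤ E (ρ 0) - E (ρ M) := by
      intro M
      induction M with
      | zero => simp
      | succ M ih =>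
        rw [Finset.sum_range_succ, mul_add]
        have := hstep M
        linarith
    have hsummable : Summable fun n => D (ρ (n + 1)) := by
      apply summable_of_sum_range_le (c := (E (ρ 0) - c0) / Δt) (fun n => hDnn (n + 1))
      intro M
      have h1 := hpartial M
      have h2 := hElb M
      rw [le_div_iff₀ hΔt]
      have h3 : (∑ n ∈ range M, D (ρ (n + 1))) * Δt =
          Δt * ∑ n ∈ range M, D (ρ (n + 1)) := by ring
      linarith
    have hD0 : Tendsto (fun n => D (ρ (n + 1))) atTop (nhds 0) :=
      hsummable.tendsto_atTop_zero
    have hD0' : Tendsto (fun n => D (ρ n)) atTop (nhds 0) :=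
      (Filter.tendsto_add_atTop_iff_nat 1).mp hD0
    have hDφ : Tendsto (fun j => D (ρ (φ j))) atTop (nhds 0) :=
      hD0'.comp hφmono.tendsto_atTop
    -- all interface fluxes vanish at p
    have hFluxp : ∀ k, numFlux N Δx V m1 m2 U' p k = 0 := by
      intro k
      by_cases hk : k + 1 < N
      · have hkr : k ∈ range (N - 1) := Finset.mem_range.mpr (by omega)
        have hterm0 : Tendsto
            (fun j => numFlux N Δx V m1 m2 U' (ρ (φ j)) k * vel N Δx V U' (ρ (φ j)) k)
            atTop (nhds 0) := by
          apply squeeze_zero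
            (fun j => flux_mul_vel_nonneg N Δx α V m1 m2 U' hm1_nonneg hm2_nonneg
              (ρ (φ j)) (hmem (φ j)) k)
            (fun j => ?_) hDφ
          exact Finset.single_le_sum
            (fun l _ => flux_mul_vel_nonneg N Δx α V m1 m2 U' hm1_nonneg hm2_nonneg
              (ρ (φ j)) (hmem (φ j)) l) hkr
        have hcont := tendsto_flux_vel N Δx α V m1 m2 U' hU'_cont hm1_cont hm2_cont
          (fun j => ρ (φ j)) (fun j i => hmem (φ j) i) p hp hφtend k
        have hprod := hcont.1.mul hcont.2
        have hzero : numFlux N Δx V m1 m2 U' p k * vel N Δx V U' p k = 0 :=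
          tendsto_nhds_unique hprod hterm0
        exact flux_zero_of_mul_vel_zero N Δx α V m1 m2 U' p k hzero
      · exact numFlux_boundary hk
    have hfix : Hmap N Δx Δt V m1 m2 U' 1 p = p := by
      funext i
      simp [Hmap, hFluxp]
    -- ℓ¹ convergence towards p
    set e : ℕ → ℝ := fun n => ∑ i, |ρ n i - p i| with he
    have hestep : ∀ n, e (n + 1) ≤ e n := by
      intro n
      have h := l1_contraction N hN1 Δx Δt hΔxpos hΔt.le α V m1 m2 U' hU'mono
        hm1_mono hm1_nonneg hm2_anti hm2_nonneg (ρ (n + 1)) p (hmem (n + 1)) hp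
      rw [horbit n, hfix] at h
      exact h
    have heanti : Antitone e := antitone_nat_of_succ_le hestep
    have henn : ∀ n, 0 ≤ e n := fun n => Finset.sum_nonneg fun i _ => abs_nonneg _
    have heφ : Tendsto (fun j => e (φ j)) atTop (nhds 0) := by
      have h0 : Tendsto (fun j => ∑ i, |ρ (φ j) i - p i|) atTop
          (nhds (∑ i : Fin N, |p i - p i|)) := by
        apply tendsto_finset_sum
        intro i _
        exact ((tendsto_pi_nhds.mp hφtend i).sub tendsto_const_nhds).abs
      simpa using h0
    have hbdd : BddBelow (Set.range e) := by
      refine ⟨0, ?_⟩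
      rintro x ⟨n, rfl⟩
      exact henn n
    have h1 := tendsto_atTop_ciInf heanti hbdd
    have h2 := h1.comp hφmono.tendsto_atTop
    have hinf : ⨅ n, e n = 0 := tendsto_nhds_unique h2 heφ
    rw [hinf] at h1
    -- conclude pointwise convergence
    refine ⟨p, ?_, hfix⟩
    rw [tendsto_pi_nhds]
    intro i
    have habs : Tendsto (fun n => |ρ n i - p i|) atTop (nhds 0) := by
      apply squeeze_zero (fun n => abs_nonneg _) (fun n => ?_) h1
      exact Finset.single_le_sum (f := fun j => |ρ n j - p j|)
        (fun j _ => abs_nonneg _) (Finset.mem_univ i)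
    rw [tendsto_iff_dist_tendsto_zero]
    simpa [Real.dist_eq] using habs
  · -- Part (ii)
    intro ρ η ρlim ηlim hρmem hρorb hηmem hηorb hρt hηt
    have hcontr : ∀ n, ∑ i, |ρ (n + 1) i - η (n + 1) i| ≤ ∑ i, |ρ n i - η n i| := by
      intro n
      have h := l1_contraction N hN1 Δx Δt hΔxpos hΔt.le α V m1 m2 U' hU'mono
        hm1_mono hm1_nonneg hm2_anti hm2_nonneg (ρ (n + 1)) (η (n + 1))
        (hρmem (n + 1)) (hηmem (n + 1))
      rw [hρorb n, hηorb n] at h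
      exact h
    have hanti : Antitone fun n => ∑ i, |ρ n i - η n i| :=
      antitone_nat_of_succ_le hcontr
    have htendE : Tendsto (fun n => ∑ i, |ρ n i - η n i|) atTop
        (nhds (∑ i, |ρlim i - ηlim i|)) := by
      apply tendsto_finset_sum
      intro i _
      exact ((tendsto_pi_nhds.mp hρt i).sub (tendsto_pi_nhds.mp hηt i)).abs
    exact le_of_tendsto htendE (Eventually.of_forall fun n => hanti (Nat.zero_le n))
end

section
/- Assume U : [0,α] → ℝ is convex and continuously differentiable on [0,α] with derivative U′ strictly increasing on (0,α), and that m¹, m² : [0,α] → [0,∞) satisfy m¹(0) = 0 and m²(α) = 0. For C ∈ ℝ define ρ ∈ [0,α]^N by ρ_i = 0 if C − V_i ≤ U′(0), ρ_i = (U′)⁻¹(C − V_i) if U′(0) < C − V_i < U′(α), and ρ_i = α if C − V_i ≥ U′(α). Then F_{i+1/2}(ρ) = 0 for all 1 ≤ i ≤ N−1; in particular H(λ,ρ) = ρ for every λ ≥ 0, i.e., the truncated profile T_{0,α}∘(U′)⁻¹(C − V_i) is a constant-in-time solution of the implicit finite-volume scheme. -/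
open Set Finset

/-- The truncated profile T_{0,α}∘(U′)⁻¹(C − V_i) has vanishing numerical fluxes and is
a constant-in-time solution of the implicit finite-volume scheme. -/
theorem scheme_truncated_profile_stationary
    (N : ℕ) (hN : 2 ≤ N) (Δx Δt : ℝ) (hΔx : Δx = 1 / N) (hΔt : 0 < Δt)
    (α : ℝ) (hα : 0 < α) (V : Fin N → ℝ)
    (U U' : ℝ → ℝ) (hU_conv : ConvexOn ℝ (Icc 0 α) U)
    (hU_deriv : ∀ s ∈ Icc 0 α, HasDerivWithinAt U (U' s) (Icc 0 α) s)
    (hU'_cont : ContinuousOn U' (Icc 0 α))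
    (hU'_smono : StrictMonoOn U' (Ioo 0 α))
    (m1 m2 : ℝ → ℝ)
    (hm1_nonneg : ∀ s ∈ Icc 0 α, 0 ≤ m1 s) (hm10 : m1 0 = 0)
    (hm2_nonneg : ∀ s ∈ Icc 0 α, 0 ≤ m2 s) (hm2α : m2 α = 0)
    (C : ℝ) (ρ : Fin N → ℝ)
    (hρ : ∀ i : Fin N,
      (C - V i ≤ U' 0 → ρ i = 0) ∧
      (U' 0 < C - V i → C - V i < U' α → ρ i ∈ Ioo 0 α ∧ U' (ρ i) = C - V i) ∧
      (U' α ≤ C - V i → ρ i = α)) :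
    (∀ k : ℕ, numFlux N Δx V m1 m2 U' ρ k = 0) ∧
    (∀ lam : ℝ, 0 ≤ lam → Hmap N Δx Δt V m1 m2 U' lam ρ = ρ) := by

  have hΔxpos : 0 < Δx := by
    rw [hΔx]
    have : (0:ℝ) < N := by exact_mod_cast Nat.lt_of_lt_of_le (by norm_num) hN
    positivity
  have key : ∀ i : Fin N,
      (ρ i = 0 ∧ C ≤ U' (ρ i) + V i) ∨ (ρ i = α ∧ U' (ρ i) + V i ≤ C) ∨
        U' (ρ i) + V i = C := by
    intro i
    obtain ⟨h0, hmid, hα'⟩ := hρ i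
    rcases le_or_gt (C - V i) (U' 0) with h | h
    · left
      have h0' := h0 h
      refine ⟨h0', ?_⟩
      rw [h0']; linarith
    · rcases lt_or_ge (C - V i) (U' α) with h2 | h2
      · right; right
        have := (hmid h h2).2; linarith
      · right; left
        have hα2 := hα' h2
        refine ⟨hα2, ?_⟩
        rw [hα2]; linarith
  have hflux : ∀ k : ℕ, numFlux N Δx V m1 m2 U' ρ k = 0 := by
    intro k
    unfold numFlux
    split
    case isTrue h =>
      set i : Fin N := ⟨k, Nat.lt_of_succ_lt h⟩ with hi
      set j : Fin N := ⟨k + 1, h⟩ with hj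
      set v := vel N Δx V U' ρ k with hv
      have hvdef : v = -(((U' (ρ j) + V j) - (U' (ρ i) + V i)) / Δx) := by
        rw [hv]; unfold vel; rw [dif_pos h]
      have t1 : m1 (ρ i) * m2 (ρ j) * max v 0 = 0 := by
        rcases le_or_gt v 0 with hv0 | hv0
        · rw [max_eq_right hv0, mul_zero]
        · have hlt : U' (ρ j) + V j < U' (ρ i) + V i := by
            by_contra hc
            push_neg at hc
            have h1 : 0 ≤ ((U' (ρ j) + V j) - (U' (ρ i) + V i)) / Δx :=
              div_nonneg (by linarith) hΔxpos.le
            rw [hvdef] at hv0; linarith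
          rcases key i with ⟨h0, _⟩ | ⟨_, hle⟩ | heq
          · rw [h0, hm10]; ring
          · rcases key j with ⟨_, hge⟩ | ⟨hα2, _⟩ | heq2
            · linarith
            · rw [hα2, hm2α]; ring
            · linarith
          · rcases key j with ⟨_, hge⟩ | ⟨hα2, _⟩ | heq2
            · linarith
            · rw [hα2, hm2α]; ring
            · linarith
      have t2 : m1 (ρ j) * m2 (ρ i) * min v 0 = 0 := by
        rcases le_or_gt 0 v with hv0 | hv0
        · rw [min_eq_right hv0, mul_zero]
        · have hlt : U' (ρ i) + V i < U' (ρ j) + V j := by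
            by_contra hc
            push_neg at hc
            have h1 : ((U' (ρ j) + V j) - (U' (ρ i) + V i)) / Δx ≤ 0 :=
              div_nonpos_of_nonpos_of_nonneg (by linarith) hΔxpos.le
            rw [hvdef] at hv0; linarith
          rcases key j with ⟨h0, _⟩ | ⟨_, hle⟩ | heq
          · rw [h0, hm10]; ring
          · rcases key i with ⟨_, hge⟩ | ⟨hα2, _⟩ | heq2
            · linarith
            · rw [hα2, hm2α]; ring
            · linarith
          · rcases key i with ⟨_, hge⟩ | ⟨hα2, _⟩ | heq2
            · linarith
            · rw [hα2, hm2α]; ring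
            · linarith
      rw [t1, t2, add_zero]
    case isFalse h => rfl
  refine ⟨hflux, ?_⟩
  intro lam hlam
  funext i
  simp [Hmap, hflux]
end
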